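/- arXiv:2209.08629 — 5 statements merged into one kernel-verified Lean document; each statement's English description precedes it below -/
import Mathlib

section
/- Let ξ ∈ L¹(P) be F_T-measurable and let M be a modification with a.s. continuous paths of the martingale t ↦ E[ξ | F_t], and define β̂_t = M_t/(T−t) − ∫₀^t M_u/(T−u)² du for t ∈ [0,T). Then almost surely ∫₀^t β̂_u du = (T−t)·∫₀^t M_u/(T−u)² du for every t ∈ [0,T), and lim_{t→T⁻} ∫₀^t β̂_u du = ξ. In particular, if ∫₀^T |β̂_u| du < ∞ a.s., then ∫₀^T β̂_u du = ξ a.s. -/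
open MeasureTheory Filter Set
open scoped ENNReal Topology

noncomputable def auxG (T : ℝ) (f : ℝ → ℝ) : ℝ → ℝ := fun t => ∫ u in (0:ℝ)..t, f u / (T - u)^2

noncomputable def auxB (T : ℝ) (f : ℝ → ℝ) : ℝ → ℝ := fun u => f u / (T - u) - auxG T f u

theorem det_part1 {T : ℝ} (hT : 0 < T) {f : ℝ → ℝ} (hf : Continuous f) :
    (∀ t ∈ Ico (0:ℝ) T, (∫ u in (0:ℝ)..t, auxB T f u) = (T - t) * auxG T f t) := by
  have hsub : ∀ {a c : ℝ}, a < T → c < T → uIcc a c ⊆ Iio T := by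
    intro a c ha hc x hx
    exact lt_of_le_of_lt hx.2 (sup_lt_iff.mpr ⟨ha, hc⟩)
  have hne : ∀ {x : ℝ}, x < T → T - x ≠ 0 := fun hx => sub_ne_zero.mpr (ne_of_gt hx)
  have hcontH : ContinuousOn (fun u => f u / (T - u)^2) (Iio T) := by
    apply hf.continuousOn.div (by fun_prop)
    intro x hx
    exact pow_ne_zero _ (hne hx)
  have hIntH : ∀ {a c : ℝ}, a < T → c < T →
      IntervalIntegrable (fun u => f u / (T - u)^2) volume a c :=
    fun ha hc => (hcontH.mono (hsub ha hc)).intervalIntegrable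
  have hGd : ∀ s ∈ Iio T, HasDerivAt (auxG T f) (f s / (T - s)^2) s := by
    intro s hs
    exact intervalIntegral.integral_hasDerivAt_right (hIntH hT hs)
      (ContinuousOn.stronglyMeasurableAtFilter isOpen_Iio hcontH s hs)
      (hcontH.continuousAt (isOpen_Iio.mem_nhds hs))
  have hGc : ContinuousOn (auxG T f) (Iio T) :=
    fun s hs => (hGd s hs).continuousAt.continuousWithinAt
  have hb'c : ContinuousOn (auxB T f) (Iio T) := by
    apply ContinuousOn.sub _ hGc
    apply hf.continuousOn.div (by fun_prop)
    intro x hx; exact hne hx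
  have hIntb' : ∀ {a c : ℝ}, a < T → c < T → IntervalIntegrable (auxB T f) volume a c :=
    fun ha hc => ((hb'c.mono (hsub ha hc))).intervalIntegrable
  have hFd : ∀ s ∈ Iio T, HasDerivAt (fun t => (T - t) * auxG T f t) (auxB T f s) s := by
    intro s hs
    have h1 : HasDerivAt (fun t : ℝ => T - t) (-1) s := (hasDerivAt_id s).const_sub T
    have h2 := h1.mul (hGd s hs)
    have h3 : (-1) * auxG T f s + (T - s) * (f s / (T - s)^2) = auxB T f s := by
      have h0 := hne hs
      simp only [auxB]
      field_simp
      ring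
    exact h3 ▸ h2
  have hBd : ∀ s ∈ Iio T, HasDerivAt (fun t => ∫ u in (0:ℝ)..t, auxB T f u) (auxB T f s) s := by
    intro s hs
    exact intervalIntegral.integral_hasDerivAt_right (hIntb' hT hs)
      (ContinuousOn.stronglyMeasurableAtFilter isOpen_Iio hb'c s hs)
      (hb'c.continuousAt (isOpen_Iio.mem_nhds hs))
  intro t ht
  have htT := ht.2
  have hsubt : Icc (0:ℝ) t ⊆ Iio T := fun x hx => lt_of_le_of_lt hx.2 htT
  have h1 : ∀ x ∈ Ico (0:ℝ) t,
      HasDerivWithinAt (fun r => ∫ u in (0:ℝ)..r, auxB T f u) (auxB T f x) (Ici x) x :=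
    fun x hx => (hBd x (hsubt ⟨hx.1, hx.2.le⟩)).hasDerivWithinAt
  have h2 : ∀ x ∈ Ico (0:ℝ) t,
      HasDerivWithinAt (fun r => (T - r) * auxG T f r) (auxB T f x) (Ici x) x :=
    fun x hx => (hFd x (hsubt ⟨hx.1, hx.2.le⟩)).hasDerivWithinAt
  have h3 : ContinuousOn (fun r => ∫ u in (0:ℝ)..r, auxB T f u) (Icc 0 t) :=
    fun x hx => (hBd x (hsubt hx)).continuousAt.continuousWithinAt
  have h4 : ContinuousOn (fun r => (T - r) * auxG T f r) (Icc 0 t) :=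
    fun x hx => (hFd x (hsubt hx)).continuousAt.continuousWithinAt
  have h0 : (∫ u in (0:ℝ)..(0:ℝ), auxB T f u) = (T - 0) * auxG T f 0 := by
    simp [auxG, intervalIntegral.integral_same]
  exact eq_of_has_deriv_right_eq h1 h2 h3 h4 h0 t ⟨ht.1, le_refl t⟩

set_option maxHeartbeats 1000000 in
theorem det_part2 {T : ℝ} (hT : 0 < T) {f : ℝ → ℝ} (hf : Continuous f) :
    Tendsto (fun t => (T - t) * auxG T f t) (𝓝[<] T) (𝓝 (f T)) := by
  have hsub : ∀ {a c : ℝ}, a < T → c < T → uIcc a c ⊆ Iio T := by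
    intro a c ha hc x hx
    exact lt_of_le_of_lt hx.2 (sup_lt_iff.mpr ⟨ha, hc⟩)
  have hne : ∀ {x : ℝ}, x < T → T - x ≠ 0 := fun hx => sub_ne_zero.mpr (ne_of_gt hx)
  -- inverse-square integral
  have hcontI : ContinuousOn (fun u : ℝ => 1 / (T - u)^2) (Iio T) := by
    apply continuousOn_const.div (by fun_prop)
    intro x hx
    exact pow_ne_zero _ (hne hx)
  have hIntI : ∀ {a c : ℝ}, a < T → c < T →
      IntervalIntegrable (fun u : ℝ => 1 / (T - u)^2) volume a c :=
    fun ha hc => (hcontI.mono (hsub ha hc)).intervalIntegrable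
  have hIinv : ∀ a c : ℝ, a < T → c < T →
      (∫ u in a..c, 1 / (T - u)^2) = 1/(T - c) - 1/(T - a) := by
    intro a c ha hc
    have hderiv : ∀ x ∈ uIcc a c, HasDerivAt (fun u => 1/(T - u)) (1/(T - x)^2) x := by
      intro x hx
      have hxT : x < T := hsub ha hc hx
      have h0 : T - x ≠ 0 := hne hxT
      have h : HasDerivAt (fun u => 1 / (T - u)) _ x :=
        (hasDerivAt_const x (1:ℝ)).div ((hasDerivAt_id x).const_sub T) h0
      convert h using 1
      simp
    rw [intervalIntegral.integral_eq_sub_of_hasDerivAt hderiv (hIntI ha hc)]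
  -- K
  have hcontK : ContinuousOn (fun u => (f u - f T) / (T - u)^2) (Iio T) := by
    apply ContinuousOn.div (by fun_prop) (by fun_prop)
    intro x hx
    exact pow_ne_zero _ (hne hx)
  have hIntK : ∀ {a c : ℝ}, a < T → c < T →
      IntervalIntegrable (fun u => (f u - f T) / (T - u)^2) volume a c :=
    fun ha hc => (hcontK.mono (hsub ha hc)).intervalIntegrable
  rw [Metric.tendsto_nhdsWithin_nhds]
  intro ε hε
  set ε' := ε/4 with hε'def
  have hε'pos : 0 < ε' := by positivity
  obtain ⟨δ₀, hδ₀pos, hδ₀⟩ := Metric.continuousAt_iff.mp (hf.continuousAt (x := T)) ε' hε'pos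
  set s := max 0 (T - δ₀/2) with hsdef
  have hs0 : 0 ≤ s := le_max_left _ _
  have hsT : s < T := max_lt hT (by linarith)
  have hsδ : T - δ₀/2 ≤ s := le_max_right _ _
  set C := |∫ u in (0:ℝ)..s, (f u - f T) / (T - u)^2| with hCdef
  have hC0 : 0 ≤ C := abs_nonneg _
  refine ⟨min (T - s) (min (ε'/(C+1)) (ε' * T / (|f T| + 1))),
    lt_min (by linarith) (lt_min (by positivity) (by positivity)), ?_⟩
  intro t htT hdist
  rw [Real.dist_eq, abs_of_neg (by linarith [mem_Iio.mp htT] : t - T < 0), neg_sub] at hdist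
  have htT' : t < T := htT
  have hd1 : T - t < T - s := lt_of_lt_of_le hdist (min_le_left _ _)
  have hd2 : T - t < ε'/(C+1) := lt_of_lt_of_le hdist ((min_le_right _ _).trans (min_le_left _ _))
  have hd3 : T - t < ε' * T / (|f T| + 1) :=
    lt_of_lt_of_le hdist ((min_le_right _ _).trans (min_le_right _ _))
  have hst : s < t := by linarith
  have ht0 : 0 ≤ t := le_trans hs0 hst.le
  have htne : T - t ≠ 0 := hne htT'
  have htpos : 0 < T - t := by linarith
  -- decompose G t
  have hGt : auxG T f t = (∫ u in (0:ℝ)..t, (f u - f T) / (T - u)^2)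
      + f T * (1/(T - t) - 1/T) := by
    have hpt : ∀ u ∈ uIcc (0:ℝ) t, f u / (T - u)^2
        = (fun u => (f u - f T) / (T - u)^2 + f T * (1 / (T - u)^2)) u := by
      intro u hu
      have huT : u < T := hsub hT htT' hu
      have h0 : T - u ≠ 0 := hne huT
      simp only
      field_simp
      ring
    simp only [auxG]
    rw [intervalIntegral.integral_congr hpt,
      intervalIntegral.integral_add (hIntK hT htT') ((hIntI hT htT').const_mul (f T)),
      intervalIntegral.integral_const_mul, hIinv 0 t hT htT', sub_zero]
  have hsplit : (∫ u in (0:ℝ)..t, (f u - f T) / (T - u)^2)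
      = (∫ u in (0:ℝ)..s, (f u - f T) / (T - u)^2) + ∫ u in s..t, (f u - f T) / (T - u)^2 :=
    (intervalIntegral.integral_add_adjacent_intervals (hIntK hT hsT) (hIntK hsT htT')).symm
  -- bound on [s,t]
  have hnorm2 : |∫ u in s..t, (f u - f T) / (T - u)^2| ≤ ε' * (1/(T - t) - 1/(T - s)) := by
    have hae : ∀ᵐ u ∂(volume.restrict (Set.uIoc s t)),
        ‖(f u - f T) / (T - u)^2‖ ≤ ε' * (1 / (T - u)^2) := by
      rw [uIoc_of_le hst.le]
      refine (ae_restrict_iff' measurableSet_Ioc).mpr (Eventually.of_forall ?_)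
      intro u hu
      have huT : u < T := lt_of_le_of_lt hu.2 htT'
      have hupos : 0 < T - u := by linarith
      have hfu : |f u - f T| ≤ ε' := by
        apply le_of_lt
        apply hδ₀
        rw [Real.dist_eq, abs_of_neg (by linarith : u - T < 0), neg_sub]
        have : s < u := hu.1
        linarith
      rw [Real.norm_eq_abs, abs_div, abs_of_pos (by positivity : (0:ℝ) < (T - u)^2)]
      rw [mul_one_div]
      gcongr
    have h := intervalIntegral.norm_integral_le_abs_of_norm_le hae ((hIntI hsT htT').const_mul ε')
    rw [Real.norm_eq_abs] at h
    refine h.trans ?_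
    rw [intervalIntegral.integral_const_mul, hIinv s t hsT htT']
    have h1 : 1/(T - s) ≤ 1/(T - t) := one_div_le_one_div_of_le htpos (by linarith)
    rw [abs_of_nonneg (mul_nonneg hε'pos.le (by linarith))]
  -- final estimate
  rw [Real.dist_eq]
  have heq : (T - t) * auxG T f t - f T
      = (T - t) * (∫ u in (0:ℝ)..s, (f u - f T) / (T - u)^2)
      + (T - t) * (∫ u in s..t, (f u - f T) / (T - u)^2)
      - f T * (T - t) / T := by
    rw [hGt, hsplit]
    field_simp
    ring
  have e1 : |(T - t) * (∫ u in (0:ℝ)..s, (f u - f T) / (T - u)^2)| ≤ ε' := by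
    rw [abs_mul, abs_of_pos htpos, ← hCdef]
    have h1 : (T - t) * C ≤ (ε'/(C+1)) * C := mul_le_mul_of_nonneg_right hd2.le hC0
    have h2 : (ε'/(C+1)) * C ≤ ε' := by
      rw [div_mul_eq_mul_div, div_le_iff₀ (by positivity)]
      nlinarith
    linarith
  have e2 : |(T - t) * (∫ u in s..t, (f u - f T) / (T - u)^2)| ≤ ε' := by
    rw [abs_mul, abs_of_pos htpos]
    have h2 : (T - t) * |∫ u in s..t, (f u - f T) / (T - u)^2|
        ≤ (T - t) * (ε' * (1/(T - t) - 1/(T - s))) :=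
      mul_le_mul_of_nonneg_left hnorm2 htpos.le
    have hts : 0 < T - s := by linarith
    have h3 : (T - t) * (ε' * (1/(T - t) - 1/(T - s))) = ε' * (1 - (T - t)/(T - s)) := by
      field_simp
    have h4 : 0 ≤ (T - t)/(T - s) := div_nonneg htpos.le hts.le
    nlinarith
  have e3 : |f T * (T - t) / T| ≤ ε' := by
    rw [abs_div, abs_mul, abs_of_pos htpos, abs_of_pos hT, div_le_iff₀ hT]
    have h1 : (T - t) * (|f T| + 1) < ε' * T := (lt_div_iff₀ (by positivity)).mp hd3
    have h2 : |f T| * (T - t) ≤ (|f T| + 1) * (T - t) :=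
      mul_le_mul_of_nonneg_right (by linarith [abs_nonneg (f T)]) htpos.le
    have h3 : (|f T| + 1) * (T - t) < ε' * T := by rw [mul_comm]; exact h1
    linarith
  rw [heq]
  have habs : ∀ A B Cc : ℝ, |A + B - Cc| ≤ |A| + |B| + |Cc| := by
    intro A B Cc
    have h1 := abs_add_le A B
    have h2 := abs_add_le (A + B) (-Cc)
    rw [abs_neg, ← sub_eq_add_neg] at h2
    linarith
  have := habs ((T - t) * (∫ u in (0:ℝ)..s, (f u - f T) / (T - u)^2))
    ((T - t) * (∫ u in s..t, (f u - f T) / (T - u)^2)) (f T * (T - t) / T)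
  have hfin : ε' + ε' + ε' < ε := by rw [hε'def]; linarith
  linarith

theorem det_lemma {T : ℝ} (hT : 0 < T) {f : ℝ → ℝ} (hf : Continuous f) (b : ℝ → ℝ)
    (hb : ∀ u ∈ Ioc (0:ℝ) T, b u = f u / (T - u) - ∫ v in Ioc (0:ℝ) u, f v / (T - v)^2) :
    (∀ t ∈ Ico (0:ℝ) T, ∫ u in Ioc (0:ℝ) t, b u
        = (T - t) * ∫ u in Ioc (0:ℝ) t, f u / (T - u)^2)
    ∧ Tendsto (fun t => ∫ u in Ioc (0:ℝ) t, b u) (𝓝[<] T) (𝓝 (f T))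
    ∧ ((∫⁻ u in Ioc (0:ℝ) T, ENNReal.ofReal |b u|) < ⊤ →
        ∫ u in Ioc (0:ℝ) T, b u = f T) := by
  have hne : ∀ {x : ℝ}, x < T → T - x ≠ 0 := fun hx => sub_ne_zero.mpr (ne_of_gt hx)
  have hcontH : ContinuousOn (fun u => f u / (T - u)^2) (Iio T) := by
    apply hf.continuousOn.div (by fun_prop)
    intro x hx
    exact pow_ne_zero _ (hne hx)
  have hGd : ∀ s ∈ Iio T, HasDerivAt (auxG T f) (f s / (T - s)^2) s := by
    intro s hs
    refine intervalIntegral.integral_hasDerivAt_right ?_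
      (ContinuousOn.stronglyMeasurableAtFilter isOpen_Iio hcontH s hs)
      (hcontH.continuousAt (isOpen_Iio.mem_nhds hs))
    apply (hcontH.mono _).intervalIntegrable
    intro x hx
    exact lt_of_le_of_lt hx.2 (sup_lt_iff.mpr ⟨hT, hs⟩)
  have hGc : ContinuousOn (auxG T f) (Iio T) :=
    fun s hs => (hGd s hs).continuousAt.continuousWithinAt
  have hb'c : ContinuousOn (auxB T f) (Iio T) := by
    apply ContinuousOn.sub _ hGc
    apply hf.continuousOn.div (by fun_prop)
    intro x hx; exact hne hx
  -- b = auxB on Ioc 0 T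
  have hbb' : ∀ u ∈ Ioc (0:ℝ) T, b u = auxB T f u := by
    intro u hu
    rw [hb u hu, ← intervalIntegral.integral_of_le hu.1.le]
    rfl
  have hIocb : ∀ t, 0 ≤ t → t ≤ T → (∫ u in Ioc (0:ℝ) t, b u) = ∫ u in (0:ℝ)..t, auxB T f u := by
    intro t ht0 htT
    rw [intervalIntegral.integral_of_le ht0]
    exact setIntegral_congr_fun measurableSet_Ioc fun u hu =>
      hbb' u ⟨hu.1, hu.2.trans htT⟩
  have bullet1 : ∀ t ∈ Ico (0:ℝ) T, (∫ u in Ioc (0:ℝ) t, b u)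
      = (T - t) * ∫ u in Ioc (0:ℝ) t, f u / (T - u)^2 := by
    intro t ht
    rw [hIocb t ht.1 ht.2.le, det_part1 hT hf t ht]
    congr 1
    rw [auxG, ← intervalIntegral.integral_of_le ht.1]
  have bullet2 : Tendsto (fun t => ∫ u in Ioc (0:ℝ) t, b u) (𝓝[<] T) (𝓝 (f T)) := by
    apply (det_part2 hT hf).congr'
    filter_upwards [Ioo_mem_nhdsLT_of_mem (⟨hT, le_refl T⟩ : T ∈ Ioc 0 T)] with t ht
    rw [hIocb t ht.1.le ht.2.le, det_part1 hT hf t ⟨ht.1.le, ht.2⟩]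
  refine ⟨bullet1, bullet2, ?_⟩
  intro hfin
  have hmeas : AEStronglyMeasurable (auxB T f) (volume.restrict (Ioc 0 T)) := by
    rw [← Measure.restrict_congr_set Ioo_ae_eq_Ioc]
    exact (hb'c.mono Ioo_subset_Iio_self).aestronglyMeasurable measurableSet_Ioo
  have hInt : IntegrableOn (auxB T f) (Ioc 0 T) := by
    refine ⟨hmeas, ?_⟩
    have heq : (∫⁻ u in Ioc (0:ℝ) T, (‖auxB T f u‖₊ : ℝ≥0∞))
        = ∫⁻ u in Ioc (0:ℝ) T, ENNReal.ofReal |b u| := by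
      refine setLIntegral_congr_fun measurableSet_Ioc (fun u hu => ?_)
      rw [hbb' u hu, ← Real.norm_eq_abs, ofReal_norm]; rfl
    rw [HasFiniteIntegral]
    exact lt_of_eq_of_lt heq hfin
  obtain ⟨tseq, htseq_mono, htseq_mem, htseq_lim⟩ := exists_seq_strictMono_tendsto' hT
  have h4 : Tendsto tseq atTop (𝓝[<] T) :=
    tendsto_nhdsWithin_of_tendsto_nhds_of_eventually_within _ htseq_lim
      (Eventually.of_forall fun n => (htseq_mem n).2)
  have hUnion : (⋃ n, Ioc (0:ℝ) (tseq n)) = Ioo 0 T := by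
    ext x
    simp only [mem_iUnion, mem_Ioc, mem_Ioo]
    constructor
    · rintro ⟨n, hx1, hx2⟩
      exact ⟨hx1, lt_of_le_of_lt hx2 (htseq_mem n).2⟩
    · rintro ⟨hx1, hx2⟩
      obtain ⟨n, hn⟩ := (htseq_lim.eventually (eventually_ge_nhds hx2)).exists
      exact ⟨n, hx1, hn⟩
  have h5 : Tendsto (fun n => ∫ u in Ioc (0:ℝ) (tseq n), auxB T f u) atTop
      (𝓝 (∫ u in Ioo (0:ℝ) T, auxB T f u)) := by
    have := tendsto_setIntegral_of_monotone (fun n => measurableSet_Ioc)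
      (fun m n h => Ioc_subset_Ioc le_rfl (htseq_mono.monotone h))
      (hUnion ▸ (hInt.mono_set Ioo_subset_Ioc_self))
    rwa [hUnion] at this
  have h6 : Tendsto (fun n => ∫ u in Ioc (0:ℝ) (tseq n), b u) atTop (𝓝 (f T)) :=
    bullet2.comp h4
  have h7 : (fun n => ∫ u in Ioc (0:ℝ) (tseq n), auxB T f u)
      = fun n => ∫ u in Ioc (0:ℝ) (tseq n), b u := by
    funext n
    exact setIntegral_congr_fun measurableSet_Ioc fun u hu =>
      (hbb' u ⟨hu.1, hu.2.trans (htseq_mem n).2.le⟩).symm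
  rw [h7] at h5
  have h8 : (∫ u in Ioo (0:ℝ) T, auxB T f u) = f T := tendsto_nhds_unique h5 h6
  calc (∫ u in Ioc (0:ℝ) T, b u) = ∫ u in Ioc (0:ℝ) T, auxB T f u :=
        setIntegral_congr_fun measurableSet_Ioc hbb'
    _ = ∫ u in Ioo (0:ℝ) T, auxB T f u := integral_Ioc_eq_integral_Ioo
    _ = f T := h8

theorem stmt0
    {Ω : Type*} {mΩ : MeasurableSpace Ω} (μ : Measure Ω) [IsProbabilityMeasure μ]
    (ℱ : Filtration ℝ mΩ) (T : ℝ) (hT : 0 < T)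
    (ξ : Ω → ℝ) (hξ_int : Integrable ξ μ) (hξ_meas : StronglyMeasurable[ℱ T] ξ)
    (M : ℝ → Ω → ℝ) (hM_adapted : Adapted ℱ M)
    (hM_cont : ∀ᵐ ω ∂μ, ContinuousOn (fun t => M t ω) (Icc 0 T))
    (hM_mod : ∀ t ∈ Icc (0:ℝ) T, M t =ᵐ[μ] μ[ξ|ℱ t])
    (βhat : ℝ → Ω → ℝ)
    (hβhat : ∀ t ω, βhat t ω = M t ω / (T - t) - ∫ u in Ioc (0:ℝ) t, M u ω / (T - u)^2) :
    (∀ᵐ ω ∂μ,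
        (∀ t ∈ Ico (0:ℝ) T,
          ∫ u in Ioc (0:ℝ) t, βhat u ω
            = (T - t) * ∫ u in Ioc (0:ℝ) t, M u ω / (T - u)^2)
        ∧ Tendsto (fun t => ∫ u in Ioc (0:ℝ) t, βhat u ω) (𝓝[<] T) (𝓝 (ξ ω)))
    ∧ ((∀ᵐ ω ∂μ, (∫⁻ u in Ioc (0:ℝ) T, ENNReal.ofReal |βhat u ω|) < ⊤) →
        ∀ᵐ ω ∂μ, ∫ u in Ioc (0:ℝ) T, βhat u ω = ξ ω) := by
  have hMT : M T =ᵐ[μ] ξ := by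
    have h1 := hM_mod T ⟨hT.le, le_rfl⟩
    have h2 : μ[ξ|ℱ T] = ξ := condExp_of_stronglyMeasurable (ℱ.le T) hξ_meas hξ_int
    rw [h2] at h1
    exact h1
  have key : ∀ᵐ ω ∂μ,
      ((∀ t ∈ Ico (0:ℝ) T,
          ∫ u in Ioc (0:ℝ) t, βhat u ω
            = (T - t) * ∫ u in Ioc (0:ℝ) t, M u ω / (T - u)^2)
        ∧ Tendsto (fun t => ∫ u in Ioc (0:ℝ) t, βhat u ω) (𝓝[<] T) (𝓝 (ξ ω)))
      ∧ ((∫⁻ u in Ioc (0:ℝ) T, ENNReal.ofReal |βhat u ω|) < ⊤ →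
          ∫ u in Ioc (0:ℝ) T, βhat u ω = ξ ω) := by
    filter_upwards [hM_cont, hMT] with ω hcont hMTω
    have hgc : Continuous (IccExtend hT.le ((Icc (0:ℝ) T).restrict (fun t => M t ω))) :=
      Continuous.Icc_extend' (continuousOn_iff_continuous_restrict.mp hcont)
    set g : ℝ → ℝ := IccExtend hT.le ((Icc (0:ℝ) T).restrict (fun t => M t ω)) with hgdef
    have hge : ∀ u (hu : u ∈ Icc (0:ℝ) T), g u = M u ω := fun u hu =>
      IccExtend_of_mem hT.le _ hu
    have hgT : g T = ξ ω := by rw [hge T ⟨hT.le, le_rfl⟩, hMTω]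
    have hb : ∀ u ∈ Ioc (0:ℝ) T, βhat u ω = g u / (T - u) - ∫ v in Ioc (0:ℝ) u, g v / (T - v)^2 := by
      intro u hu
      rw [hβhat]
      rw [hge u ⟨hu.1.le, hu.2⟩]
      congr 1
      exact setIntegral_congr_fun measurableSet_Ioc fun v hv => by
        rw [hge v ⟨hv.1.le, hv.2.trans hu.2⟩]
    obtain ⟨c1, c2, c3⟩ := det_lemma hT hgc _ hb
    refine ⟨⟨fun t ht => ?_, hgT ▸ c2⟩, hgT ▸ c3⟩
    rw [c1 t ht]
    congr 1
    exact (setIntegral_congr_fun measurableSet_Ioc fun v hv => by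
      rw [hge v ⟨hv.1.le, (hv.2.trans ht.2.le)⟩]).symm
  refine ⟨key.mono fun ω h => h.1, fun hP => ?_⟩
  filter_upwards [key, hP] with ω h hc using h.2 hc
end

section
/- Let ξ ∈ L¹(P) be F_T-measurable, assume the martingale t ↦ E[ξ | F_t] admits a modification M with a.s. continuous paths, and let β̂_t = M_t/(T−t) − ∫₀^t M_u/(T−u)² du. If β* ∈ B^{2,1}(ξ) is such that the process (β*_t)_{t∈[0,T)} is a martingale with respect to (F_t) with a.s. continuous paths, then almost surely β*_t = β̂_t for all t ∈ [0,T); that is, β̂ is the unique martingale element of B^{2,1}(ξ) on [0,T). -/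
open MeasureTheory Filter Set
open scoped ENNReal Topology

/-- `β ∈ B^{2,1}(ξ)` : `β` is progressively measurable, `E[∫₀^T β_u² du] < ∞`,
and `∫₀^T β_u du = ξ` almost surely. -/
def MemB21 {Ω : Type*} {mΩ : MeasurableSpace Ω} (μ : Measure Ω) (ℱ : Filtration ℝ mΩ)
    (T : ℝ) (ξ : Ω → ℝ) (β : ℝ → Ω → ℝ) : Prop :=
  ProgMeasurable ℱ β ∧
  (∫⁻ ω, (∫⁻ u in Set.Ioc (0:ℝ) T, ENNReal.ofReal ((β u ω)^2)) ∂μ) < ⊤ ∧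
  ∀ᵐ ω ∂μ, ∫ u in Set.Ioc (0:ℝ) T, β u ω = ξ ω

/-- Joint strong measurability of the "capped" process from progressive-type measurability. -/
lemma jointSM {Ω : Type*} {m' m'' : MeasurableSpace Ω} (hle : m' ≤ m'') {t : ℝ} {b : ℝ → Ω → ℝ}
    (h : StronglyMeasurable[Subtype.instMeasurableSpace.prod m']
      fun p : Set.Iic t × Ω => b p.1 p.2) :
    StronglyMeasurable[(inferInstance : MeasurableSpace ℝ).prod m'']
      (fun p : ℝ × Ω => b (min p.1 t) p.2) := by
  have φm : @Measurable (ℝ × Ω) (Set.Iic t × Ω)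
      ((inferInstance : MeasurableSpace ℝ).prod m'')
      (Subtype.instMeasurableSpace.prod m')
      (fun p => (⟨min p.1 t, mem_Iic.2 (min_le_right _ _)⟩, p.2)) := by
    refine Measurable.prodMk ?_ ?_
    · exact Measurable.subtype_mk (measurable_fst.min measurable_const)
    · exact measurable_snd.mono le_rfl hle
  exact h.comp_measurable φm

/-- Strong measurability (w.r.t. the time-`t` σ-algebra) of `ω ↦ ∫ u in Ioc 0 t, b u ω`. -/
lemma Ysm {Ω : Type*} {m' : MeasurableSpace Ω} {t : ℝ} {b : ℝ → Ω → ℝ}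
    (h : StronglyMeasurable[Subtype.instMeasurableSpace.prod m']
      fun p : Set.Iic t × Ω => b p.1 p.2) :
    StronglyMeasurable[m'] (fun ω => ∫ u in Ioc (0:ℝ) t, b u ω) := by
  have h1 := (jointSM le_rfl h).integral_prod_left'
    (μ := (volume : Measure ℝ).restrict (Ioc (0:ℝ) t))
  have h2 : (fun ω => ∫ u in Ioc (0:ℝ) t, b u ω)
      = fun ω => ∫ u in Ioc (0:ℝ) t, b (min u t) ω := by
    funext ω
    exact setIntegral_congr_fun measurableSet_Ioc (fun u hu => by rw [min_eq_left hu.2])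
  rw [h2]
  exact h1

theorem stmt3
    {Ω : Type*} {mΩ : MeasurableSpace Ω} (μ : Measure Ω) [IsProbabilityMeasure μ]
    (ℱ : Filtration ℝ mΩ) (T : ℝ) (hT : 0 < T)
    (ξ : Ω → ℝ) (hξ_int : Integrable ξ μ) (hξ_meas : StronglyMeasurable[ℱ T] ξ)
    (M : ℝ → Ω → ℝ) (hM_adapted : Adapted ℱ M)
    (hM_cont : ∀ᵐ ω ∂μ, ContinuousOn (fun t => M t ω) (Icc 0 T))
    (hM_mod : ∀ t ∈ Icc (0:ℝ) T, M t =ᵐ[μ] μ[ξ|ℱ t])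
    (βhat : ℝ → Ω → ℝ)
    (hβhat : ∀ t ω, βhat t ω = M t ω / (T - t) - ∫ u in Ioc (0:ℝ) t, M u ω / (T - u)^2)
    -- `β*` is an element of `B^{2,1}(ξ)` ...
    (βstar : ℝ → Ω → ℝ) (hβstar_mem : MemB21 μ ℱ T ξ βstar)
    -- ... which is a martingale on `[0,T)` with a.s. continuous paths:
    (hβstar_adapted : Adapted ℱ βstar)
    (hβstar_cont : ∀ᵐ ω ∂μ, ContinuousOn (fun t => βstar t ω) (Ico 0 T))
    (hβstar_int : ∀ t ∈ Ico (0:ℝ) T, Integrable (βstar t) μ)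
    (hβstar_mart : ∀ s t : ℝ, 0 ≤ s → s ≤ t → t < T → μ[βstar t|ℱ s] =ᵐ[μ] βstar s) :
    ∀ᵐ ω ∂μ, ∀ t ∈ Ico (0:ℝ) T, βstar t ω = βhat t ω := by
  obtain ⟨hprog, hL2, hξeq⟩ := hβstar_mem
  -- Joint a.e. strong measurability on `(0,T] × Ω`
  have hsmT : StronglyMeasurable (fun p : ℝ × Ω => βstar (min p.1 T) p.2) :=
    jointSM (ℱ.le T) (hprog T)
  have haesm : AEStronglyMeasurable (fun p : ℝ × Ω => βstar p.1 p.2)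
      ((volume.restrict (Ioc (0:ℝ) T)).prod μ) := by
    refine ⟨fun p => βstar (min p.1 T) p.2, hsmT.mono le_rfl, ?_⟩
    rw [Measure.restrict_prod_eq_prod_univ]
    refine (ae_restrict_iff' ((measurableSet_Ioc).prod MeasurableSet.univ)).2
      (Eventually.of_forall fun p hp => ?_)
    show βstar p.1 p.2 = βstar (min p.1 T) p.2
    rw [min_eq_left hp.1.2]
  -- Product integrability from the L² bound
  have hInt : Integrable (fun p : ℝ × Ω => βstar p.1 p.2)
      ((volume.restrict (Ioc (0:ℝ) T)).prod μ) := by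
    refine ⟨haesm, ?_⟩
    haveI : IsFiniteMeasure (volume.restrict (Ioc (0:ℝ) T)) :=
      ⟨by rw [Measure.restrict_apply_univ]; exact measure_Ioc_lt_top⟩
    have hle : ∀ p : ℝ × Ω,
        (‖βstar p.1 p.2‖₊ : ℝ≥0∞) ≤ ENNReal.ofReal ((βstar p.1 p.2)^2) + 1 := by
      intro p
      set x := βstar p.1 p.2
      have h1 : |x| ≤ x^2 + 1 := by nlinarith [abs_nonneg x, sq_abs x, sq_nonneg (|x| - 1)]
      calc (‖x‖₊ : ℝ≥0∞) = ENNReal.ofReal |x| := by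
            rw [← Real.norm_eq_abs, ofReal_norm, enorm_eq_nnnorm]
        _ ≤ ENNReal.ofReal (x^2 + 1) := ENNReal.ofReal_le_ofReal h1
        _ = ENNReal.ofReal (x^2) + 1 := by
            rw [ENNReal.ofReal_add (sq_nonneg x) zero_le_one, ENNReal.ofReal_one]
    have haem : AEMeasurable (fun p : ℝ × Ω => ENNReal.ofReal ((βstar p.1 p.2)^2))
        ((volume.restrict (Ioc (0:ℝ) T)).prod μ) :=
      ENNReal.measurable_ofReal.comp_aemeasurable ((haesm.aemeasurable).pow_const 2)
    have hsq : ∫⁻ p, ENNReal.ofReal ((βstar p.1 p.2)^2)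
        ∂((volume.restrict (Ioc (0:ℝ) T)).prod μ) < ⊤ := by
      rw [MeasureTheory.lintegral_prod_symm _ haem]
      exact hL2
    refine lt_of_le_of_lt (lintegral_mono hle) ?_
    rw [lintegral_add_right _ measurable_const, lintegral_const]
    exact ENNReal.add_lt_top.2 ⟨hsq, by simp [ENNReal.mul_lt_top, measure_lt_top]⟩
  -- a.e. pathwise integrability on `(0,T]`
  have hIntOn : ∀ᵐ ω ∂μ, IntegrableOn (fun u => βstar u ω) (Ioc (0:ℝ) T) volume := by
    have := hInt.swap.prod_right_ae
    filter_upwards [this] with ω hω using hω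
  -- restricted product integrability
  have hIntRes : ∀ (s : Set ℝ), s ⊆ Ioc (0:ℝ) T → MeasurableSet s → ∀ (A : Set Ω),
      Integrable (fun p : ℝ × Ω => βstar p.1 p.2) ((volume.restrict s).prod (μ.restrict A)) := by
    intro s hs hsm A
    have h1 : volume.restrict s = (volume.restrict (Ioc (0:ℝ) T)).restrict s := by
      rw [Measure.restrict_restrict hsm, inter_eq_self_of_subset_left hs]
    rw [h1, Measure.prod_restrict]
    exact hInt.integrableOn
  -- STEP 1 : for each fixed `t ∈ [0,T)`, `M_t = ∫₀^t β* + (T-t) β*_t` a.e.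
  have key : ∀ t, 0 ≤ t → t < T →
      (fun ω => (∫ u in Ioc (0:ℝ) t, βstar u ω) + (T - t) * βstar t ω) =ᵐ[μ] M t := by
    intro t ht0 htT
    have htmem : t ∈ Ico (0:ℝ) T := ⟨ht0, htT⟩
    set Y : Ω → ℝ := fun ω => ∫ u in Ioc (0:ℝ) t, βstar u ω with hYdef
    set Z : Ω → ℝ := fun ω => ∫ u in Ioc t T, βstar u ω with hZdef
    have hYsm : StronglyMeasurable[ℱ t] Y := Ysm (hprog t)
    have hsub1 : Ioc (0:ℝ) t ⊆ Ioc 0 T := Ioc_subset_Ioc le_rfl htT.le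
    have hsub2 : Ioc t T ⊆ Ioc (0:ℝ) T := Ioc_subset_Ioc ht0 le_rfl
    have hYint : Integrable Y μ := by
      have h := hIntRes (Ioc (0:ℝ) t) hsub1 measurableSet_Ioc univ
      rw [Measure.restrict_univ] at h
      exact h.integral_prod_right
    have hZint : Integrable Z μ := by
      have h := hIntRes (Ioc t T) hsub2 measurableSet_Ioc univ
      rw [Measure.restrict_univ] at h
      exact h.integral_prod_right
    have hsplit : ξ =ᵐ[μ] fun ω => Y ω + Z ω := by
      filter_upwards [hξeq, hIntOn] with ω h1 h2
      rw [← h1, ← Ioc_union_Ioc_eq_Ioc ht0 htT.le,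
        setIntegral_union (Set.Ioc_disjoint_Ioc_of_le le_rfl) measurableSet_Ioc
          (h2.mono_set hsub1) (h2.mono_set hsub2)]
    have hcondY : μ[Y|ℱ t] = Y := condExp_of_stronglyMeasurable (ℱ.le t) hYsm hYint
    have hcondZ : (fun ω => (T - t) * βstar t ω) =ᵐ[μ] μ[Z|ℱ t] := by
      refine ae_eq_condExp_of_forall_setIntegral_eq (ℱ.le t) hZint ?_ ?_ ?_
      · intro s _ _
        exact ((hβstar_int t htmem).const_mul _).integrableOn
      · intro s hs hμs
        have hA := hIntRes (Ioc t T) hsub2 measurableSet_Ioc s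
        have hswap := integral_integral_swap (f := fun (u:ℝ) (ω:Ω) => βstar u ω) hA
        have hZs : ∫ ω in s, Z ω ∂μ = ∫ u in Ioc t T, (∫ ω in s, βstar u ω ∂μ) := hswap.symm
        have hmart : ∀ u ∈ Ioo t T, (∫ ω in s, βstar u ω ∂μ) = ∫ ω in s, βstar t ω ∂μ := by
          intro u hu
          have h7 := hβstar_mart t u ht0 hu.1.le hu.2
          rw [← setIntegral_condExp (ℱ.le t) (hβstar_int u ⟨ht0.trans hu.1.le, hu.2⟩) hs]
          exact integral_congr_ae (ae_restrict_of_ae h7)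
        calc ∫ ω in s, (T - t) * βstar t ω ∂μ
            = (T - t) * ∫ ω in s, βstar t ω ∂μ := integral_const_mul _ _
          _ = ∫ u in Ioo t T, (∫ ω in s, βstar t ω ∂μ) := by
              rw [setIntegral_const, measureReal_def, Real.volume_Ioo, smul_eq_mul,
                ENNReal.toReal_ofReal (sub_nonneg.2 htT.le)]
          _ = ∫ u in Ioo t T, (∫ ω in s, βstar u ω ∂μ) :=
              setIntegral_congr_fun measurableSet_Ioo fun u hu => (hmart u hu).symm
          _ = ∫ u in Ioc t T, (∫ ω in s, βstar u ω ∂μ) := setIntegral_congr_set Ioo_ae_eq_Ioc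
          _ = ∫ ω in s, Z ω ∂μ := hZs.symm
      · exact ((hβstar_adapted t).const_mul (T - t)).aestronglyMeasurable
    have h8 : μ[ξ|ℱ t] =ᵐ[μ] fun ω => Y ω + (T - t) * βstar t ω := by
      calc μ[ξ|ℱ t] =ᵐ[μ] μ[fun ω => Y ω + Z ω|ℱ t] := condExp_congr_ae hsplit
        _ =ᵐ[μ] μ[Y|ℱ t] + μ[Z|ℱ t] := condExp_add hYint hZint _
        _ =ᵐ[μ] fun ω => Y ω + (T - t) * βstar t ω := by
            rw [hcondY]
            filter_upwards [hcondZ] with ω h2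
            simp only [Pi.add_apply, ← h2]
    exact ((hM_mod t ⟨ht0, htT.le⟩).trans h8).symm
  -- STEP 2 : simultaneous version over rationals
  have hQ : ∀ᵐ ω ∂μ, ∀ q : ℚ, 0 ≤ (q:ℝ) → (q:ℝ) < T →
      (∫ u in Ioc (0:ℝ) (q:ℝ), βstar u ω) + (T - (q:ℝ)) * βstar (q:ℝ) ω = M (q:ℝ) ω := by
    rw [ae_all_iff]
    intro q
    by_cases h0 : 0 ≤ (q:ℝ)
    · by_cases h1 : (q:ℝ) < T
      · filter_upwards [key (q:ℝ) h0 h1] with ω hω _ _ using hω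
      · exact Eventually.of_forall fun ω _ h => absurd h h1
    · exact Eventually.of_forall fun ω h _ => absurd h h0
  -- STEP 3 : pathwise argument
  filter_upwards [hM_cont, hβstar_cont, hIntOn, hQ] with ω hMc hbc hIL1 hQω
  set b : ℝ → ℝ := fun u => βstar u ω with hb
  set Yf : ℝ → ℝ := fun s => ∫ u in Ioc (0:ℝ) s, b u with hYf
  have hIccInt : IntegrableOn b (Icc (0:ℝ) T) volume := by
    rwa [IntegrableOn, Measure.restrict_congr_set Ioc_ae_eq_Icc] at hIL1
  have hYcont : ContinuousOn Yf (Icc 0 T) := intervalIntegral.continuousOn_primitive hIccInt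
  -- identity for all `t ∈ [0,T)` by density of rationals
  have hid : ∀ t ∈ Ico (0:ℝ) T, Yf t + (T - t) * b t = M t ω := by
    intro t ht
    have hex : ∀ n : ℕ, ∃ q : ℚ, t < (q:ℝ) ∧ (q:ℝ) < min T (t + 1/(n+1)) := by
      intro n
      exact exists_rat_btwn (lt_min ht.2 (lt_add_of_pos_right t (by positivity)))
    choose q hq1 hq2 using hex
    have hq0 : ∀ n, 0 ≤ (q n : ℝ) := fun n => le_of_lt (lt_of_le_of_lt ht.1 (hq1 n))
    have hqT : ∀ n, (q n:ℝ) < T := fun n => lt_of_lt_of_le (hq2 n) (min_le_left _ _)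
    have hqtend : Tendsto (fun n => (q n : ℝ)) atTop (𝓝 t) := by
      have hup : Tendsto (fun n : ℕ => t + 1/(n+1:ℝ)) atTop (𝓝 t) := by
        have := tendsto_one_div_add_atTop_nhds_zero_nat (𝕜 := ℝ)
        simpa using tendsto_const_nhds.add this
      refine tendsto_of_tendsto_of_tendsto_of_le_of_le tendsto_const_nhds hup
        (fun n => (hq1 n).le) (fun n => ((hq2 n).trans_le (min_le_right _ _)).le)
    have htendIcc : Tendsto (fun n => (q n : ℝ)) atTop (𝓝[Icc 0 T] t) :=
      tendsto_nhdsWithin_iff.2 ⟨hqtend, Eventually.of_forall fun n => ⟨hq0 n, (hqT n).le⟩⟩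
    have htendIco : Tendsto (fun n => (q n : ℝ)) atTop (𝓝[Ico 0 T] t) :=
      tendsto_nhdsWithin_iff.2 ⟨hqtend, Eventually.of_forall fun n => ⟨hq0 n, hqT n⟩⟩
    have h1 : Tendsto (fun n => M (q n : ℝ) ω) atTop (𝓝 (M t ω)) :=
      (hMc t ⟨ht.1, ht.2.le⟩).tendsto.comp htendIcc
    have h2 : Tendsto (fun n => b (q n : ℝ)) atTop (𝓝 (b t)) :=
      (hbc t ht).tendsto.comp htendIco
    have h3 : Tendsto (fun n => Yf (q n : ℝ)) atTop (𝓝 (Yf t)) :=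
      (hYcont t ⟨ht.1, ht.2.le⟩).tendsto.comp htendIcc
    have h4 : Tendsto (fun n => Yf (q n : ℝ) + (T - (q n : ℝ)) * b (q n : ℝ)) atTop
        (𝓝 (Yf t + (T - t) * b t)) :=
      h3.add ((tendsto_const_nhds.sub hqtend).mul h2)
    have h5 : (fun n => Yf (q n : ℝ) + (T - (q n : ℝ)) * b (q n : ℝ))
        = fun n => M (q n : ℝ) ω := funext fun n => hQω (q n) (hq0 n) (hqT n)
    rw [h5] at h4
    exact tendsto_nhds_unique h4 h1
  -- pathwise ODE argument
  intro t ht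
  have hTt : T - t ≠ 0 := sub_ne_zero.2 (ne_of_gt ht.2)
  set F : ℝ → ℝ := fun s => ∫ u in (0:ℝ)..s, b u with hFdef
  set w : ℝ → ℝ := fun u => M u ω / (T - u)^2 with hwdef
  set G : ℝ → ℝ := fun s => F s * (T - s)⁻¹ with hGdef
  set H : ℝ → ℝ := fun s => ∫ u in (0:ℝ)..s, w u with hHdef
  have hwcont : ContinuousOn w (Ico 0 T) := by
    refine ContinuousOn.div (hMc.mono Ico_subset_Icc_self)
      ((continuous_const.sub continuous_id).pow 2).continuousOn ?_
    intro u hu; exact pow_ne_zero _ (sub_ne_zero.2 (ne_of_gt hu.2))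
  have hFderiv : ∀ y ∈ Ico (0:ℝ) t, HasDerivWithinAt F (b y) (Ici y) y := by
    intro y hy
    have hyT : y < T := lt_trans hy.2 ht.2
    have hyIco : y ∈ Ico (0:ℝ) T := ⟨hy.1, hyT⟩
    have hmem : Ico (0:ℝ) T ∈ 𝓝[Ioi y] y :=
      mem_of_superset (inter_mem_nhdsWithin (Ioi y) (Iio_mem_nhds hyT))
        (fun x hx => ⟨le_of_lt (lt_of_le_of_lt hy.1 hx.1), hx.2⟩)
    refine intervalIntegral.integral_hasDerivWithinAt_right ?_
      ⟨Ico 0 T, hmem, hbc.aestronglyMeasurable measurableSet_Ico⟩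
      ((hbc y hyIco).mono_of_mem_nhdsWithin hmem)
    exact (intervalIntegrable_iff_integrableOn_Ioc_of_le hy.1).2
      (hIL1.mono_set (Ioc_subset_Ioc le_rfl hyT.le))
  have hHderiv : ∀ y ∈ Ico (0:ℝ) t, HasDerivWithinAt H (w y) (Ici y) y := by
    intro y hy
    have hyT : y < T := lt_trans hy.2 ht.2
    have hyIco : y ∈ Ico (0:ℝ) T := ⟨hy.1, hyT⟩
    have hmem : Ico (0:ℝ) T ∈ 𝓝[Ioi y] y :=
      mem_of_superset (inter_mem_nhdsWithin (Ioi y) (Iio_mem_nhds hyT))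
        (fun x hx => ⟨le_of_lt (lt_of_le_of_lt hy.1 hx.1), hx.2⟩)
    refine intervalIntegral.integral_hasDerivWithinAt_right ?_
      ⟨Ico 0 T, hmem, hwcont.aestronglyMeasurable measurableSet_Ico⟩
      ((hwcont y hyIco).mono_of_mem_nhdsWithin hmem)
    have hwIcc : ContinuousOn w (Icc 0 y) :=
      hwcont.mono (fun x hx => ⟨hx.1, lt_of_le_of_lt hx.2 hyT⟩)
    exact hwIcc.intervalIntegrable_of_Icc hy.1
  have hGderiv : ∀ y ∈ Ico (0:ℝ) t, HasDerivWithinAt G (w y) (Ici y) y := by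
    intro y hy
    have hyT : y < T := lt_trans hy.2 ht.2
    have hTy : T - y ≠ 0 := sub_ne_zero.2 (ne_of_gt hyT)
    have h1 : HasDerivWithinAt (fun s : ℝ => T - s) (-1) (Ici y) y :=
      (hasDerivWithinAt_id y _).const_sub T
    have h2 := h1.inv hTy
    have hinv : HasDerivWithinAt (fun s => (T - s)⁻¹) (((T - y)^2)⁻¹) (Ici y) y := by
      refine h2.congr_deriv ?_
      rw [neg_neg, one_div]
    have h3 := (hFderiv y hy).mul hinv
    have hFY : F y = Yf y := intervalIntegral.integral_of_le hy.1
    have hMy := hid y ⟨hy.1, hyT⟩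
    refine h3.congr_deriv ?_
    symm
    show M y ω / (T - y)^2 = b y * (T - y)⁻¹ + F y * ((T - y)^2)⁻¹
    rw [hFY, ← hMy]
    field_simp
    ring
  have hGcont : ContinuousOn G (Icc 0 t) := by
    have hFc : ContinuousOn F (Icc 0 t) := by
      refine ContinuousOn.congr (hYcont.mono (Icc_subset_Icc le_rfl ht.2.le)) ?_
      exact fun x hx => intervalIntegral.integral_of_le hx.1
    exact hFc.mul ((continuous_const.sub continuous_id).continuousOn.inv₀
      (fun s hs => sub_ne_zero.2 (ne_of_gt (lt_of_le_of_lt hs.2 ht.2))))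
  have hHcont : ContinuousOn H (Icc 0 t) := by
    have hint : IntegrableOn w (Icc 0 t) volume :=
      (hwcont.mono (fun x hx => ⟨hx.1, lt_of_le_of_lt hx.2 ht.2⟩)).integrableOn_Icc
    refine ContinuousOn.congr (intervalIntegral.continuousOn_primitive hint) ?_
    exact fun x hx => intervalIntegral.integral_of_le hx.1
  have hzero : G 0 = H 0 := by
    simp [hGdef, hHdef, hFdef, intervalIntegral.integral_same]
  have key2 : G t = H t :=
    eq_of_has_deriv_right_eq hGderiv hHderiv hGcont hHcont hzero t (right_mem_Icc.2 ht.1)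
  rw [hβhat]
  have hFY : F t = Yf t := intervalIntegral.integral_of_le ht.1
  have hset : (∫ u in Ioc (0:ℝ) t, M u ω / (T - u)^2) = H t :=
    (intervalIntegral.integral_of_le ht.1).symm
  rw [hset, ← key2]
  show b t = M t ω / (T - t) - F t * (T - t)⁻¹
  rw [hFY, ← hid t ht]
  field_simp
  ring
end

section
/- Suppose the filtration (F_t)_{t∈[0,T]} supports a Brownian motion W, i.e., W is an (F_t)-adapted process with a.s. continuous paths, W_0 = 0, and for all 0 ≤ s ≤ t ≤ T the increment W_t − W_s is independent of F_s and has Gaussian law with mean 0 and variance t − s. Let g : ℝ → ℝ be twice continuously differentiable and ξ = g(W_T). Then there exists a progressively measurable process β with ∫₀^T β_u² du < ∞ a.s. and ∫₀^T β_u du = ξ a.s. if and only if g is constant. -/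
open MeasureTheory ProbabilityTheory Filter Set
open scoped ENNReal Topology

/-- `β ∈ B^{2,0}(ξ)` : `β` is progressively measurable, `∫₀^T β_u² du < ∞` a.s.,
and `∫₀^T β_u du = ξ` almost surely. -/
def MemB20 {Ω : Type*} {mΩ : MeasurableSpace Ω} (μ : Measure Ω) (ℱ : Filtration ℝ mΩ)
    (T : ℝ) (ξ : Ω → ℝ) (β : ℝ → Ω → ℝ) : Prop :=
  ProgMeasurable ℱ β ∧
  (∀ᵐ ω ∂μ, (∫⁻ u in Set.Ioc (0:ℝ) T, ENNReal.ofReal ((β u ω)^2)) < ⊤) ∧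
  ∀ᵐ ω ∂μ, ∫ u in Set.Ioc (0:ℝ) T, β u ω = ξ ω

section Aux
open scoped NNReal Real

lemma gauss_lb {v : ℝ≥0} (hv : v ≠ 0) {a b m : ℝ} (hab : a ≤ b)
    (hm : ∀ x ∈ Icc a b, x ^ 2 ≤ m) :
    ENNReal.ofReal ((b - a) * ((Real.sqrt (2 * π * v))⁻¹ * Real.exp (-m / (2 * v)))) ≤
      gaussianReal 0 v (Icc a b) := by
  rw [gaussianReal_of_var_ne_zero _ hv, withDensity_apply _ measurableSet_Icc]
  have hc : ∀ x ∈ Icc a b,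
      ENNReal.ofReal ((Real.sqrt (2 * π * v))⁻¹ * Real.exp (-m / (2 * v))) ≤ gaussianPDF 0 v x := by
    intro x hx
    rw [gaussianPDF]
    apply ENNReal.ofReal_le_ofReal
    rw [gaussianPDFReal]
    have h2v : (0:ℝ) < 2 * v := by positivity
    have hexp : Real.exp (-m / (2 * v)) ≤ Real.exp (-(x - 0) ^ 2 / (2 * v)) := by
      apply Real.exp_le_exp.mpr
      apply div_le_div_of_nonneg_right ?_ h2v.le
      simpa using neg_le_neg (hm x hx)
    have : (0:ℝ) ≤ (Real.sqrt (2 * π * v))⁻¹ := by positivity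
    exact mul_le_mul_of_nonneg_left hexp this
  calc ENNReal.ofReal ((b - a) * ((Real.sqrt (2 * π * v))⁻¹ * Real.exp (-m / (2 * v))))
      = ENNReal.ofReal ((Real.sqrt (2 * π * v))⁻¹ * Real.exp (-m / (2 * v))) * volume (Icc a b) := by
        rw [Real.volume_Icc, ← ENNReal.ofReal_mul (by positivity), mul_comm]
    _ = ∫⁻ _ in Icc a b, ENNReal.ofReal ((Real.sqrt (2 * π * v))⁻¹ * Real.exp (-m / (2 * v))) := by
        rw [setLIntegral_const]
    _ ≤ ∫⁻ x in Icc a b, gaussianPDF 0 v x := by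
        apply setLIntegral_mono (measurable_gaussianPDF 0 v) hc

lemma mono_gap {g : ℝ → ℝ} (hg : Differentiable ℝ g) {δ c r : ℝ}
    (hδ : ∀ x ∈ Icc (c - r) (c + r), δ ≤ deriv g x) {a b : ℝ}
    (ha : a ∈ Icc (c - r) (c + r)) (hb : b ∈ Icc (c - r) (c + r)) (hab : a ≤ b) :
    g a + δ * (b - a) ≤ g b := by
  have hd : ∀ x : ℝ, HasDerivAt (fun y => g y - δ * y) (deriv g x - δ) x := by
    intro x
    exact (hg x).hasDerivAt.sub (by simpa using (hasDerivAt_id x).const_mul δ)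
  have hmono : MonotoneOn (fun x => g x - δ * x) (Icc (c - r) (c + r)) := by
    refine monotoneOn_of_deriv_nonneg (convex_Icc _ _)
      (fun x _ => ((hd x).continuousAt).continuousWithinAt)
      (fun x _ => ((hd x).differentiableAt).differentiableWithinAt) ?_
    intro x hx
    rw [interior_Icc] at hx
    rw [(hd x).deriv, sub_nonneg]
    exact hδ x (Ioo_subset_Icc_self hx)
  have := hmono ha hb hab
  simp only at this
  nlinarith [this]

lemma capped_meas {Ω : Type*} {mΩ : MeasurableSpace Ω} {ℱ : Filtration ℝ mΩ} {β : ℝ → Ω → ℝ}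
    (hβ : ProgMeasurable ℱ β) (t : ℝ) (m' : MeasurableSpace Ω) (hm' : ℱ t ≤ m') :
    StronglyMeasurable[Real.measurableSpace.prod m'] (fun p : ℝ × Ω => β (min p.1 t) p.2) := by
  have hsnd : @Measurable (ℝ × Ω) Ω (Real.measurableSpace.prod m') (ℱ t) Prod.snd :=
    measurable_snd.mono le_rfl hm'
  have hφ : @Measurable (ℝ × Ω) (Set.Iic t × Ω) (Real.measurableSpace.prod m')
      (Subtype.instMeasurableSpace.prod (ℱ t))
      (fun p : ℝ × Ω => ((⟨min p.1 t, Set.mem_Iic.mpr (min_le_right _ _)⟩ : Set.Iic t), p.2)) := by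
    refine Measurable.prodMk (Measurable.subtype_mk ?_) hsnd
    exact measurable_fst.min measurable_const
  exact (hβ t).comp_measurable hφ

lemma integral_param_meas {Ω : Type*} (mΩ' : MeasurableSpace Ω) (ν : Measure ℝ) [SFinite ν]
    {f : Ω × ℝ → ℝ} (hf : StronglyMeasurable[mΩ'.prod Real.measurableSpace] f) :
    StronglyMeasurable[mΩ'] fun ω => ∫ u, f (ω, u) ∂ν := by
  letI := mΩ'
  exact hf.integral_prod_right'

lemma Y_meas {Ω : Type*} {mΩ : MeasurableSpace Ω} {ℱ : Filtration ℝ mΩ} {β : ℝ → Ω → ℝ}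
    (hβ : ProgMeasurable ℱ β) (t : ℝ) :
    StronglyMeasurable[ℱ t] (fun ω => ∫ u in Set.Ioc (0:ℝ) t, β u ω) := by
  have h1 : StronglyMeasurable[(ℱ t).prod Real.measurableSpace]
      (fun p : Ω × ℝ => β (min p.2 t) p.1) :=
    (capped_meas hβ t (ℱ t) le_rfl).comp_measurable measurable_swap
  have h2 := integral_param_meas (ℱ t) (volume.restrict (Set.Ioc (0:ℝ) t)) h1
  have hfun : (fun ω => ∫ u in Set.Ioc (0:ℝ) t, β u ω)
      = (fun ω => ∫ u, β (min u t) ω ∂(volume.restrict (Set.Ioc (0:ℝ) t))) := by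
    funext ω
    refine setIntegral_congr_fun measurableSet_Ioc fun u hu => ?_
    simp [min_eq_left hu.2]
  rw [hfun]
  exact h2

lemma peromega_meas {Ω : Type*} {mΩ : MeasurableSpace Ω} {ℱ : Filtration ℝ mΩ} {β : ℝ → Ω → ℝ}
    (hβ : ProgMeasurable ℱ β) (t : ℝ) (ω : Ω) :
    Measurable (fun u : ℝ => β (min u t) ω) :=
  (capped_meas hβ t mΩ (ℱ.le t)).measurable.comp (measurable_id.prodMk measurable_const)

lemma A_meas {Ω : Type*} {mΩ : MeasurableSpace Ω} {ℱ : Filtration ℝ mΩ} {β : ℝ → Ω → ℝ}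
    (hβ : ProgMeasurable ℱ β) (T s : ℝ) :
    Measurable (fun ω => ∫⁻ u in Set.Ioc s T, ENNReal.ofReal ((β (min u T) ω)^2)) := by
  have h1 : Measurable (fun p : Ω × ℝ => ENNReal.ofReal ((β (min p.2 T) p.1)^2)) := by
    have := ((capped_meas hβ T mΩ (ℱ.le T)).measurable.comp (measurable_swap :
      Measurable (fun p : Ω × ℝ => (p.2, p.1))))
    exact ((this.pow_const 2)).ennreal_ofReal
  exact h1.lintegral_prod_right'

lemma abs_le_one_add_ofReal_sq (y : ℝ) :
    ENNReal.ofReal |y| ≤ 1 + ENNReal.ofReal (y^2) := by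
  rcases le_or_gt |y| 1 with h | h
  · calc ENNReal.ofReal |y| ≤ ENNReal.ofReal 1 := ENNReal.ofReal_le_ofReal h
      _ = 1 := ENNReal.ofReal_one
      _ ≤ _ := le_self_add
  · have : |y| ≤ y^2 := by nlinarith [abs_nonneg y, sq_abs y]
    calc ENNReal.ofReal |y| ≤ ENNReal.ofReal (y^2) := ENNReal.ofReal_le_ofReal this
      _ ≤ _ := le_add_self

lemma sq_integrable_of_lintegral_lt_top {b : ℝ → ℝ} (hb : Measurable b) {s : Set ℝ}
    (hs : MeasurableSet s) (hA : ∫⁻ u in s, ENNReal.ofReal ((b u)^2) < ⊤) :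
    IntegrableOn (fun u => (b u)^2) s volume := by
  refine ⟨((hb.pow_const 2).aestronglyMeasurable), ?_⟩
  rw [hasFiniteIntegral_iff_norm]
  simp only [Real.norm_eq_abs, abs_pow, sq_abs]
  exact hA

lemma integrable_of_sq_lintegral_lt_top {b : ℝ → ℝ} (hb : Measurable b) {t T : ℝ}
    (hA : ∫⁻ u in Set.Ioc t T, ENNReal.ofReal ((b u)^2) < ⊤) :
    IntegrableOn b (Set.Ioc t T) volume := by
  refine ⟨hb.aestronglyMeasurable, ?_⟩
  rw [hasFiniteIntegral_iff_norm]
  have hle : ∫⁻ u in Set.Ioc t T, ENNReal.ofReal ‖b u‖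
      ≤ ∫⁻ u in Set.Ioc t T, (1 + ENNReal.ofReal ((b u)^2)) := by
    refine lintegral_mono fun u => ?_
    rw [Real.norm_eq_abs]
    exact abs_le_one_add_ofReal_sq _
  refine lt_of_le_of_lt hle ?_
  rw [lintegral_add_left measurable_const]
  refine ENNReal.add_lt_top.mpr ⟨?_, hA⟩
  simp [Real.volume_Ioc]

lemma tail_bound {b : ℝ → ℝ} (hb : Measurable b) {t T lam s : ℝ}
    (htT : t ≤ T) (hs : 0 < s) (hlam : 0 < lam) (hE : T - t = s^2)
    (hA : ∫⁻ u in Set.Ioc t T, ENNReal.ofReal ((b u)^2) ≤ ENNReal.ofReal (lam^2)) :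
    |∫ u in Set.Ioc t T, b u| ≤ lam * s := by
  have hAlt : ∫⁻ u in Set.Ioc t T, ENNReal.ofReal ((b u)^2) < ⊤ :=
    lt_of_le_of_lt hA ENNReal.ofReal_lt_top
  have hIntSq := sq_integrable_of_lintegral_lt_top hb measurableSet_Ioc hAlt
  have hIntb := integrable_of_sq_lintegral_lt_top hb hAlt
  set c : ℝ := lam / s with hc
  have hcpos : 0 < c := div_pos hlam hs
  have hpt : ∀ u, |b u| ≤ c/2 + (b u)^2 / (2*c) := by
    intro u
    have h3 : |b u| ≤ (c^2 + (b u)^2)/(2*c) := by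
      rw [le_div_iff₀ (by positivity : (0:ℝ) < 2*c)]
      nlinarith [sq_nonneg (|b u| - c), sq_abs (b u)]
    have h4 : (c^2 + (b u)^2)/(2*c) = c/2 + (b u)^2/(2*c) := by field_simp
    rw [h4] at h3
    exact h3
  have hIntRHS : IntegrableOn (fun u => c/2 + (b u)^2/(2*c)) (Set.Ioc t T) volume := by
    exact Integrable.add ((integrableOn_const_iff).mpr (Or.inr (by simp [Real.volume_Ioc])))
      (hIntSq.div_const _)
  have step1 : |∫ u in Set.Ioc t T, b u| ≤ ∫ u in Set.Ioc t T, |b u| := by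
    simpa [Real.norm_eq_abs] using
      norm_integral_le_integral_norm (μ := volume.restrict (Set.Ioc t T)) b
  have step2 : ∫ u in Set.Ioc t T, |b u| ≤ ∫ u in Set.Ioc t T, (c/2 + (b u)^2/(2*c)) :=
    integral_mono hIntb.abs hIntRHS (fun u => hpt u)
  have hsqle : ∫ u in Set.Ioc t T, (b u)^2 ≤ lam^2 := by
    rw [integral_eq_lintegral_of_nonneg_ae (ae_of_all _ fun u => sq_nonneg (b u))
      (hb.pow_const 2).aestronglyMeasurable]
    calc (∫⁻ u in Set.Ioc t T, ENNReal.ofReal ((b u)^2)).toReal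
        ≤ (ENNReal.ofReal (lam^2)).toReal := ENNReal.toReal_mono ENNReal.ofReal_ne_top hA
      _ = lam^2 := ENNReal.toReal_ofReal (sq_nonneg _)
  have step3 : ∫ u in Set.Ioc t T, (c/2 + (b u)^2/(2*c)) ≤ lam * s := by
    have hconst : IntegrableOn (fun _ : ℝ => c/2) (Set.Ioc t T) volume :=
      (integrableOn_const_iff).mpr (Or.inr (by simp [Real.volume_Ioc, ENNReal.ofReal_lt_top]))
    rw [integral_add hconst (hIntSq.div_const _), setIntegral_const, integral_div]
    have hvol : (volume (Set.Ioc t T)).toReal = s^2 := by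
      rw [Real.volume_Ioc, ENNReal.toReal_ofReal (by nlinarith : (0:ℝ) ≤ T - t), hE]
    rw [measureReal_def, hvol, smul_eq_mul]
    have h4 : (∫ u in Set.Ioc t T, (b u)^2)/(2*c) ≤ lam^2/(2*c) := by
      simp only [div_eq_mul_inv]
      exact mul_le_mul_of_nonneg_right hsqle (by positivity)
    have e1 : s^2 * (c/2) = lam * s / 2 := by rw [hc]; field_simp
    have e2 : lam^2/(2*c) = lam * s / 2 := by rw [hc]; field_simp
    linarith
  linarith [step1, step2, step3]

set_option maxHeartbeats 1000000 in
lemma key {Ω : Type*} {mΩ : MeasurableSpace Ω} (μ : Measure Ω) [IsProbabilityMeasure μ]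
    (ℱ : Filtration ℝ mΩ) (T : ℝ) (hT : 0 < T)
    (W : ℝ → Ω → ℝ) (hW_adapted : Adapted ℱ W)
    (hW_zero : ∀ᵐ ω ∂μ, W 0 ω = 0)
    (hW_indep : ∀ s t : ℝ, 0 ≤ s → s ≤ t → t ≤ T →
      Indep (MeasurableSpace.comap (fun ω => W t ω - W s ω) Real.measurableSpace) (ℱ s) μ)
    (hW_gauss : ∀ s t : ℝ, 0 ≤ s → s ≤ t → t ≤ T →
      Measure.map (fun ω => W t ω - W s ω) μ = gaussianReal 0 (Real.toNNReal (t - s)))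
    (g : ℝ → ℝ) (hg : ContDiff ℝ 2 g)
    (β : ℝ → Ω → ℝ) (hβ : MemB20 μ ℱ T (fun ω => g (W T ω)) β)
    {x₀ : ℝ} (hx₀ : 0 < deriv g x₀) : False := by
  classical
  obtain ⟨hprog, hfin_ae, hrep_ae⟩ := hβ
  have hgd : Differentiable ℝ g := hg.differentiable two_ne_zero
  have hg'c : Continuous (deriv g) := hg.continuous_deriv one_le_two
  set δ : ℝ := deriv g x₀ / 2 with hδdef
  have hδ : 0 < δ := by positivity
  -- get a radius where deriv g ≥ δ
  obtain ⟨d, hd, hdball⟩ := Metric.continuousAt_iff.mp (hg'c.continuousAt (x := x₀)) δ hδ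
  set r : ℝ := min (d/2) 1 with hrdef
  have hr : 0 < r := lt_min (by linarith) one_pos
  have hr1 : r ≤ 1 := min_le_right _ _
  have hder : ∀ x ∈ Icc (x₀ - r) (x₀ + r), δ ≤ deriv g x := by
    intro x hx
    have hdist : dist x x₀ < d := by
      rw [Real.dist_eq, abs_lt]
      obtain ⟨h1, h2⟩ := hx
      have hrd : r ≤ d/2 := min_le_left _ _
      constructor <;> linarith
    have := hdball hdist
    rw [Real.dist_eq] at this
    have := abs_lt.mp this
    simp only [hδdef] at *
    linarith [this.1]
  set lam : ℝ := δ/4 with hlamdef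
  have hlam : 0 < lam := by positivity
  set sqpi : ℝ := Real.sqrt (2*π) with hsqpi
  have hsqpipos : 0 < sqpi := Real.sqrt_pos.mpr (by positivity)
  set p₁ : ℝ := 2/sqpi * Real.exp (-(1/2 : ℝ)) with hp₁def
  set p₂ : ℝ := 1/sqpi * Real.exp (-(9/2 : ℝ)) with hp₂def
  set m₀ : ℝ := (|x₀|+1)^2 with hm₀def
  set q : ℝ := r * ((Real.sqrt (2*π*T))⁻¹ * Real.exp (-m₀/T)) with hqdef
  have hp₁ : 0 < p₁ := by positivity
  have hp₂ : 0 < p₂ := by positivity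
  have hq : 0 < q := by positivity
  -- the exceptional set
  set Nset : Set Ω := {ω | ¬ ((∫⁻ u in Set.Ioc (0:ℝ) T, ENNReal.ofReal ((β u ω)^2)) < ⊤
      ∧ ∫ u in Set.Ioc (0:ℝ) T, β u ω = g (W T ω))} with hNdef
  have hN : μ Nset = 0 := by
    have h := hfin_ae.and hrep_ae
    rw [ae_iff] at h
    exact h
  -- the main per-ε inequality
  set Eset : ℝ → Set Ω := fun ε =>
    {ω | ENNReal.ofReal (lam^2) < ∫⁻ u in Set.Ioc (T-ε) T, ENNReal.ofReal ((β (min u T) ω)^2)}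
    with hEdef
  have hEmeas : ∀ ε, MeasurableSet (Eset ε) :=
    fun ε => measurableSet_lt measurable_const (A_meas hprog T (T-ε))
  have hcap_eq : ∀ ω, ∫⁻ u in Set.Ioc (0:ℝ) T, ENNReal.ofReal ((β (min u T) ω)^2)
      = ∫⁻ u in Set.Ioc (0:ℝ) T, ENNReal.ofReal ((β u ω)^2) := by
    intro ω
    refine setLIntegral_congr_fun measurableSet_Ioc (fun u hu => ?_)
    simp [min_eq_left hu.2]
  have hmain : ∀ ε : ℝ, 0 < ε → ε ≤ T/2 → Real.sqrt ε ≤ r/6 →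
      q * p₁ * p₂ ≤ 2 * (μ (Eset ε)).toReal := by
    intro ε hε hεT hεr
    set t : ℝ := T - ε with htdef
    set s : ℝ := Real.sqrt ε with hsdef
    have hs : 0 < s := Real.sqrt_pos.mpr hε
    have hs2 : s^2 = ε := Real.sq_sqrt hε.le
    have ht0 : 0 ≤ t := by rw [htdef]; linarith
    have htpos : 0 < t := by rw [htdef]; linarith
    have htT : t ≤ T := by rw [htdef]; linarith
    have hsr : s ≤ r/6 := hεr
    have hWt : Measurable[ℱ t] (W t) := (hW_adapted t)
    have hWtm : Measurable (W t) := hWt.mono (ℱ.le t) le_rfl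
    have hWTm : Measurable (W T) := (hW_adapted T).mono (ℱ.le T) le_rfl
    have hdm : Measurable (fun ω => W T ω - W t ω) := hWTm.sub hWtm
    set G : Set Ω := (fun ω => W t ω) ⁻¹' (Icc (x₀ - r/2) (x₀ + r/2)) with hGdef
    set F₁ : Set Ω := (fun ω => W T ω - W t ω) ⁻¹' (Icc (-s) s) with hF₁def
    set F₂ : Set Ω := (fun ω => W T ω - W t ω) ⁻¹' (Icc (2*s) (3*s)) with hF₂def
    set Y : Ω → ℝ := fun ω => ∫ u in Set.Ioc (0:ℝ) t, β u ω with hYdef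
    set S : Set Ω := G ∩ {ω | Y ω ≤ g (W t ω + s) + lam * s} with hSdef
    have hGft : MeasurableSet[ℱ t] G := hWt measurableSet_Icc
    have hYft : StronglyMeasurable[ℱ t] Y := Y_meas hprog t
    have hSft : MeasurableSet[ℱ t] S := by
      refine MeasurableSet.inter hGft ?_
      exact measurableSet_le hYft.measurable
        ((hg.continuous.measurable.comp (hWt.add_const s)).add_const (lam*s))
    have hcoeε : ((Real.toNNReal ε : ℝ≥0) : ℝ) = ε := Real.coe_toNNReal _ hε.le
    have hvε : (Real.toNNReal ε) ≠ 0 := by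
      simp [Real.toNNReal_eq_zero, not_le, hε]
    have hlawd : Measure.map (fun ω => W T ω - W t ω) μ = gaussianReal 0 (Real.toNNReal ε) := by
      have h := hW_gauss t T ht0 htT le_rfl
      rwa [show T - t = ε by rw [htdef]; ring] at h
    have hlawWt : Measure.map (W t) μ = gaussianReal 0 (Real.toNNReal t) := by
      have h1 := hW_gauss 0 t le_rfl ht0 htT
      have h2 : (fun ω => W t ω - W 0 ω) =ᵐ[μ] W t := by
        filter_upwards [hW_zero] with ω h0
        simp [h0]
      rw [← Measure.map_congr h2]
      simpa using h1
    -- lower bound for μ F₁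
    have hsqeq : Real.sqrt (2*π*ε) = sqpi * s := by
      rw [show 2*π*ε = (2*π)*ε by ring, Real.sqrt_mul (by positivity)]
    have hμF₁ : ENNReal.ofReal p₁ ≤ μ F₁ := by
      have hmap : μ F₁ = gaussianReal 0 (Real.toNNReal ε) (Icc (-s) s) := by
        rw [← hlawd, Measure.map_apply hdm measurableSet_Icc]
      rw [hmap]
      have hlb := gauss_lb hvε (a := -s) (b := s) (m := ε) (by linarith)
        (fun x hx => by
          have h1 := sq_le_sq' hx.1 hx.2
          rw [hs2] at h1; exact h1)
      refine le_trans (le_of_eq ?_) hlb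
      congr 1
      rw [hcoeε, hsqeq, show -ε/(2*ε) = -(1/2 : ℝ) by field_simp]
      rw [hp₁def]
      field_simp
      ring
    have hμF₂ : ENNReal.ofReal p₂ ≤ μ F₂ := by
      have hmap : μ F₂ = gaussianReal 0 (Real.toNNReal ε) (Icc (2*s) (3*s)) := by
        rw [← hlawd, Measure.map_apply hdm measurableSet_Icc]
      rw [hmap]
      have hlb := gauss_lb hvε (a := 2*s) (b := 3*s) (m := 9*ε) (by linarith)
        (fun x hx => by
          have h1 := sq_le_sq' (by linarith [hx.1] : -(3*s) ≤ x) hx.2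
          nlinarith [hs2])
      refine le_trans (le_of_eq ?_) hlb
      congr 1
      rw [hcoeε, hsqeq, show -(9*ε)/(2*ε) = -(9/2 : ℝ) by field_simp]
      rw [hp₂def]
      field_simp
      ring
    have hcoet : ((Real.toNNReal t : ℝ≥0) : ℝ) = t := Real.coe_toNNReal _ ht0
    have hvt : (Real.toNNReal t) ≠ 0 := by
      simp [Real.toNNReal_eq_zero, not_le, htpos]
    have hm₀nonneg : (0:ℝ) ≤ m₀ := by rw [hm₀def]; positivity
    have hμG : ENNReal.ofReal q ≤ μ G := by
      have hmap : μ G = gaussianReal 0 (Real.toNNReal t) (Icc (x₀ - r/2) (x₀ + r/2)) := by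
        rw [← hlawWt, Measure.map_apply hWtm measurableSet_Icc]
      rw [hmap]
      have hlb := gauss_lb hvt (a := x₀ - r/2) (b := x₀ + r/2) (m := m₀) (by linarith)
        (fun x hx => by
          have h1 : -(|x₀|+1) ≤ x := by
            have := neg_abs_le x₀; obtain ⟨hxa, _⟩ := hx; linarith
          have h2 : x ≤ |x₀|+1 := by
            have := le_abs_self x₀; obtain ⟨_, hxb⟩ := hx; linarith
          have := sq_le_sq' h1 h2
          rw [hm₀def]; exact this)
      refine le_trans (ENNReal.ofReal_le_ofReal ?_) hlb
      rw [hcoet, show x₀ + r/2 - (x₀ - r/2) = r by ring, hqdef]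
      refine mul_le_mul_of_nonneg_left ?_ hr.le
      have h2t : T ≤ 2*t := by rw [htdef]; linarith
      have hsqle : Real.sqrt (2*π*t) ≤ Real.sqrt (2*π*T) :=
        Real.sqrt_le_sqrt (by nlinarith [Real.pi_pos])
      have hinv : (Real.sqrt (2*π*T))⁻¹ ≤ (Real.sqrt (2*π*t))⁻¹ := by
        apply inv_anti₀ (Real.sqrt_pos.mpr (by positivity)) hsqle
      have hexp : Real.exp (-m₀/T) ≤ Real.exp (-m₀/(2*t)) := by
        apply Real.exp_le_exp.mpr
        rw [neg_div, neg_div, neg_le_neg_iff]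
        exact div_le_div_of_nonneg_left hm₀nonneg hT h2t
      exact mul_le_mul hinv hexp (Real.exp_pos _).le (by positivity)
    -- independence
    have hind := hW_indep t T ht0 htT le_rfl
    have hF₁c : MeasurableSet[MeasurableSpace.comap (fun ω => W T ω - W t ω)
        Real.measurableSpace] F₁ := ⟨Icc (-s) s, measurableSet_Icc, rfl⟩
    have hF₂c : MeasurableSet[MeasurableSpace.comap (fun ω => W T ω - W t ω)
        Real.measurableSpace] F₂ := ⟨Icc (2*s) (3*s), measurableSet_Icc, rfl⟩
    have hprod1 : μ (G ∩ F₁) = μ G * μ F₁ := by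
      have h := (hind.indepSet_of_measurableSet hF₁c hGft).measure_inter_eq_mul
      rw [Set.inter_comm] at h
      rw [h, mul_comm]
    have hprod2 : μ (S ∩ F₂) = μ S * μ F₂ := by
      have h := (hind.indepSet_of_measurableSet hF₂c hSft).measure_inter_eq_mul
      rw [Set.inter_comm] at h
      rw [h, mul_comm]
    -- pointwise core bound
    have hcore : ∀ ω, ω ∉ Nset → ω ∉ Eset ε → |g (W T ω) - Y ω| ≤ lam * s := by
      intro ω hn he
      simp only [hNdef, Set.mem_setOf_eq, not_not] at hn
      obtain ⟨hfin, hrep⟩ := hn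
      simp only [hEdef, Set.mem_setOf_eq, not_lt] at he
      set b : ℝ → ℝ := fun u => β (min u T) ω with hbdef
      have hbm : Measurable b := peromega_meas hprog T ω
      have hfin' : ∫⁻ u in Set.Ioc (0:ℝ) T, ENNReal.ofReal ((b u)^2) < ⊤ := by
        rw [hbdef, hcap_eq ω]
        exact hfin
      have hIntfull : IntegrableOn b (Set.Ioc 0 T) volume :=
        integrable_of_sq_lintegral_lt_top hbm hfin'
      have htail : |∫ u in Set.Ioc t T, b u| ≤ lam * s := by
        refine tail_bound hbm htT hs hlam (by rw [htdef, hs2]; ring) ?_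
        rw [hbdef]
        exact he
      have hsplit : ∫ u in Set.Ioc (0:ℝ) T, b u
          = (∫ u in Set.Ioc (0:ℝ) t, b u) + ∫ u in Set.Ioc t T, b u := by
        rw [← setIntegral_union (Set.Ioc_disjoint_Ioc_of_le le_rfl) measurableSet_Ioc
          (hIntfull.mono_set (Set.Ioc_subset_Ioc_right htT))
          (hIntfull.mono_set (Set.Ioc_subset_Ioc_left ht0)),
          Set.Ioc_union_Ioc_eq_Ioc ht0 htT]
      have hbg : ∫ u in Set.Ioc (0:ℝ) T, b u = g (W T ω) := by
        rw [← hrep]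
        refine setIntegral_congr_fun measurableSet_Ioc fun u hu => ?_
        rw [hbdef]; simp [min_eq_left hu.2]
      have hYb : ∫ u in Set.Ioc (0:ℝ) t, b u = Y ω := by
        rw [hYdef]
        refine setIntegral_congr_fun measurableSet_Ioc fun u hu => ?_
        rw [hbdef]; simp [min_eq_left (le_trans hu.2 htT)]
      rw [show g (W T ω) - Y ω = ∫ u in Set.Ioc t T, b u by rw [← hbg, hsplit, hYb]; ring]
      exact htail
    have hmemIcc : ∀ ω, ω ∈ G → ∀ z : ℝ, |z| ≤ 3*s → W t ω + z ∈ Icc (x₀ - r) (x₀ + r) := by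
      intro ω hGm z hz
      simp only [hGdef, Set.mem_preimage, Set.mem_Icc] at hGm
      obtain ⟨h1, h2⟩ := hGm
      obtain ⟨h3, h4⟩ := abs_le.mp hz
      constructor <;> [linarith; linarith]
    have hgmono : ∀ a b : ℝ, a ∈ Icc (x₀-r) (x₀+r) → b ∈ Icc (x₀-r) (x₀+r) → a ≤ b →
        g a ≤ g b := by
      intro a b ha hb hab
      have h := mono_gap hgd hder ha hb hab
      nlinarith [mul_nonneg hδ.le (sub_nonneg.mpr hab)]
    have hsub1 : G ∩ F₁ ⊆ S ∪ (Eset ε ∪ Nset) := by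
      rintro ω ⟨hGm, hF₁m⟩
      by_cases hn : ω ∈ Nset
      · exact Or.inr (Or.inr hn)
      by_cases he : ω ∈ Eset ε
      · exact Or.inr (Or.inl he)
      left
      refine ⟨hGm, ?_⟩
      have hcl := hcore ω hn he
      simp only [hF₁def, Set.mem_preimage, Set.mem_Icc] at hF₁m
      have h1 : W T ω ∈ Icc (x₀ - r) (x₀ + r) := by
        rw [show W T ω = W t ω + (W T ω - W t ω) by ring]
        exact hmemIcc ω hGm _ (by rw [abs_le]; constructor <;> linarith [hF₁m.1, hF₁m.2])
      have h2 : W t ω + s ∈ Icc (x₀ - r) (x₀ + r) :=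
        hmemIcc ω hGm s (by rw [abs_of_nonneg hs.le]; linarith)
      have h3 : g (W T ω) ≤ g (W t ω + s) := by
        apply hgmono _ _ h1 h2
        linarith [hF₁m.2]
      obtain ⟨hcl1, _⟩ := abs_le.mp hcl
      simp only [Set.mem_setOf_eq]
      linarith
    have hsub2 : S ∩ F₂ ⊆ Eset ε ∪ Nset := by
      rintro ω ⟨hSm, hF₂m⟩
      by_cases hn : ω ∈ Nset
      · exact Or.inr hn
      by_cases he : ω ∈ Eset ε
      · exact Or.inl he
      exfalso
      obtain ⟨hGm, hYle⟩ := hSm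
      simp only [Set.mem_setOf_eq] at hYle
      have hcl := hcore ω hn he
      simp only [hF₂def, Set.mem_preimage, Set.mem_Icc] at hF₂m
      have h1 : W T ω ∈ Icc (x₀-r) (x₀+r) := by
        rw [show W T ω = W t ω + (W T ω - W t ω) by ring]
        exact hmemIcc ω hGm _ (by rw [abs_le]; constructor <;> linarith [hF₂m.1, hF₂m.2])
      have h2 : W t ω + 2*s ∈ Icc (x₀-r) (x₀+r) :=
        hmemIcc ω hGm (2*s) (by rw [abs_of_nonneg (by linarith)]; linarith)
      have h3 : W t ω + s ∈ Icc (x₀-r) (x₀+r) :=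
        hmemIcc ω hGm s (by rw [abs_of_nonneg hs.le]; linarith)
      have h4 : g (W t ω + 2*s) ≤ g (W T ω) := by
        apply hgmono _ _ h2 h1
        linarith [hF₂m.1]
      have h5 := mono_gap hgd hder h3 h2 (by linarith)
      have h6 := (abs_le.mp hcl).2
      have he1 : δ * (W t ω + 2*s - (W t ω + s)) = δ * s := by ring
      rw [he1] at h5
      have he2 : lam = δ/4 := hlamdef
      nlinarith [mul_pos hδ hs]
    -- measure algebra
    have hm1 : μ G * μ F₁ ≤ μ S + μ (Eset ε) := by
      rw [← hprod1]
      calc μ (G ∩ F₁) ≤ μ (S ∪ (Eset ε ∪ Nset)) := measure_mono hsub1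
        _ ≤ μ S + μ (Eset ε ∪ Nset) := measure_union_le _ _
        _ ≤ μ S + (μ (Eset ε) + μ Nset) := add_le_add le_rfl (measure_union_le _ _)
        _ = μ S + μ (Eset ε) := by rw [hN, add_zero]
    have hm2 : μ S * μ F₂ ≤ μ (Eset ε) := by
      rw [← hprod2]
      calc μ (S ∩ F₂) ≤ μ (Eset ε ∪ Nset) := measure_mono hsub2
        _ ≤ μ (Eset ε) + μ Nset := measure_union_le _ _
        _ = μ (Eset ε) := by rw [hN, add_zero]
    have hp₂le1 : ENNReal.ofReal p₂ ≤ 1 := le_trans hμF₂ prob_le_one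
    have hchain : ENNReal.ofReal (q*p₁*p₂) ≤ 2 * μ (Eset ε) := by
      calc ENNReal.ofReal (q*p₁*p₂)
          = (ENNReal.ofReal q * ENNReal.ofReal p₁) * ENNReal.ofReal p₂ := by
            rw [← ENNReal.ofReal_mul hq.le, ← ENNReal.ofReal_mul (by positivity)]
        _ ≤ (μ G * μ F₁) * ENNReal.ofReal p₂ := mul_le_mul' (mul_le_mul' hμG hμF₁) le_rfl
        _ ≤ (μ S + μ (Eset ε)) * ENNReal.ofReal p₂ := mul_le_mul' hm1 le_rfl
        _ = μ S * ENNReal.ofReal p₂ + μ (Eset ε) * ENNReal.ofReal p₂ := by rw [add_mul]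
        _ ≤ μ S * μ F₂ + μ (Eset ε) * 1 :=
            add_le_add (mul_le_mul' le_rfl hμF₂) (mul_le_mul' le_rfl hp₂le1)
        _ ≤ μ (Eset ε) + μ (Eset ε) := by
            rw [mul_one]
            exact add_le_add hm2 le_rfl
        _ = 2 * μ (Eset ε) := (two_mul _).symm
    have hne : (2 : ℝ≥0∞) * μ (Eset ε) ≠ ⊤ :=
      ENNReal.mul_ne_top (by simp) (measure_ne_top μ _)
    have hfin2 := (ENNReal.ofReal_le_iff_le_toReal hne).mp hchain
    rwa [ENNReal.toReal_mul, ENNReal.toReal_ofNat] at hfin2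
  -- take the limit along a sequence
  set ε₀ : ℝ := min (T/2) ((r/6)^2) with hε₀def
  have hε₀pos : 0 < ε₀ := lt_min (by linarith) (by positivity)
  set εs : ℕ → ℝ := fun n => ε₀ * (1/2)^n with hεsdef
  have hεpos : ∀ n, 0 < εs n := fun n => by rw [hεsdef]; positivity
  have hεle : ∀ n, εs n ≤ ε₀ := by
    intro n
    rw [hεsdef]
    simp only
    exact mul_le_of_le_one_right hε₀pos.le (pow_le_one₀ (by norm_num) (by norm_num))
  have hcond : ∀ n, q*p₁*p₂ ≤ 2*(μ (Eset (εs n))).toReal := by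
    intro n
    refine hmain _ (hεpos n) (le_trans (hεle n) (min_le_left _ _)) ?_
    have h := Real.sqrt_le_sqrt (le_trans (hεle n) (min_le_right _ _))
    rwa [Real.sqrt_sq (by positivity)] at h
  have hεanti : Antitone εs := by
    intro n m hnm
    rw [hεsdef]
    simp only
    exact mul_le_mul_of_nonneg_left (pow_le_pow_of_le_one (by norm_num) (by norm_num) hnm) hε₀pos.le
  have hanti : Antitone (fun n => Eset (εs n)) := by
    intro n m hnm ω hω
    simp only [hEdef, Set.mem_setOf_eq] at hω ⊢
    refine lt_of_lt_of_le hω (lintegral_mono_set ?_)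
    apply Set.Ioc_subset_Ioc_left
    have := hεanti hnm
    linarith
  have htendμ : Tendsto (fun n => μ (Eset (εs n))) atTop (𝓝 (μ (⋂ n, Eset (εs n)))) :=
    tendsto_measure_iInter_atTop (fun n => ((hEmeas _).nullMeasurableSet)) hanti
      ⟨0, measure_ne_top μ _⟩
  have htend0 : Tendsto εs atTop (𝓝 0) := by
    rw [hεsdef]
    have := tendsto_pow_atTop_nhds_zero_of_lt_one (by norm_num : (0:ℝ) ≤ 1/2)
      (by norm_num : (1/2:ℝ) < 1)
    simpa using this.const_mul ε₀
  have hiInter : μ (⋂ n, Eset (εs n)) = 0 := by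
    refine measure_mono_null ?_ hN
    intro ω hω
    simp only [Set.mem_iInter] at hω
    by_contra hn
    simp only [hNdef, Set.mem_setOf_eq, not_not] at hn
    obtain ⟨hfin, _⟩ := hn
    have hbm : Measurable (fun u => β (min u T) ω) := peromega_meas hprog T ω
    have hfin' : ∫⁻ u in Set.Ioc (0:ℝ) T, ENNReal.ofReal ((β (min u T) ω)^2) < ⊤ := by
      rw [hcap_eq ω]
      exact hfin
    set f : ℝ → ℝ≥0∞ := (Set.Ioc (0:ℝ) T).indicator
      (fun u => ENNReal.ofReal ((β (min u T) ω)^2)) with hfdef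
    have hfm : Measurable f :=
      Measurable.indicator ((hbm.pow_const 2).ennreal_ofReal) measurableSet_Ioc
    set κ : Measure ℝ := volume.withDensity f with hκdef
    have happ : ∀ n, κ (Set.Ioc (T - εs n) T)
        = ∫⁻ u in Set.Ioc (T - εs n) T, ENNReal.ofReal ((β (min u T) ω)^2) := by
      intro n
      rw [hκdef, withDensity_apply _ measurableSet_Ioc]
      refine setLIntegral_congr_fun measurableSet_Ioc (fun u hu => ?_)
      rw [hfdef]
      refine Set.indicator_of_mem ?_ _
      have hεT : εs n ≤ T/2 := le_trans (hεle n) (min_le_left _ _)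
      exact ⟨by linarith [hu.1], hu.2⟩
    have hsets_anti : Antitone (fun n => Set.Ioc (T - εs n) T) := by
      intro n m hnm
      apply Set.Ioc_subset_Ioc_left
      have := hεanti hnm
      linarith
    have hIcap : (⋂ n, Set.Ioc (T - εs n) T) = {T} := by
      ext x
      simp only [Set.mem_iInter, Set.mem_Ioc, Set.mem_singleton_iff]
      constructor
      · intro h
        have hxT : x ≤ T := (h 0).2
        refine le_antisymm hxT ?_
        by_contra hlt
        push_neg at hlt
        obtain ⟨n, hn2⟩ := (htend0.eventually_lt_const (by linarith : (0:ℝ) < T - x)).exists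
        linarith [(h n).1]
      · rintro rfl
        exact fun n => ⟨by linarith [hεpos n], le_rfl⟩
    have hκfin : κ (Set.Ioc (T - εs 0) T) ≠ ⊤ := by
      rw [happ 0]
      refine ne_of_lt (lt_of_le_of_lt (lintegral_mono_set ?_) hfin')
      refine Set.Ioc_subset_Ioc_left ?_
      have hεT : εs 0 ≤ T/2 := le_trans (hεle 0) (min_le_left _ _)
      linarith
    have htendκ : Tendsto (fun n => κ (Set.Ioc (T - εs n) T)) atTop
        (𝓝 (κ (⋂ n, Set.Ioc (T - εs n) T))) :=
      tendsto_measure_iInter_atTop (fun n => measurableSet_Ioc.nullMeasurableSet) hsets_anti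
        ⟨0, hκfin⟩
    rw [hIcap] at htendκ
    have hκT : κ {T} = 0 := by
      rw [hκdef, withDensity_apply _ (measurableSet_singleton T)]
      exact setLIntegral_measure_zero _ _ Real.volume_singleton
    rw [hκT] at htendκ
    have hev := (htendκ.eventually_lt_const
      (ENNReal.ofReal_pos.mpr (by positivity) : (0:ℝ≥0∞) < ENNReal.ofReal (lam^2))).exists
    obtain ⟨n, hn2⟩ := hev
    have hmem := hω n
    simp only [hEdef, Set.mem_setOf_eq] at hmem
    rw [← happ n] at hmem
    exact absurd hmem (not_lt.mpr hn2.le)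
  rw [hiInter] at htendμ
  have htoReal : Tendsto (fun n => 2*(μ (Eset (εs n))).toReal) atTop (𝓝 0) := by
    have h1 : Tendsto (fun n => (μ (Eset (εs n))).toReal) atTop (𝓝 0) := by
      have h2 := (ENNReal.tendsto_toReal (by simp : (0:ℝ≥0∞) ≠ ⊤)).comp htendμ
      exact h2
    simpa using h1.const_mul 2
  have hfinal := ge_of_tendsto htoReal (Filter.Eventually.of_forall hcond)
  nlinarith [mul_pos (mul_pos hq hp₁) hp₂]

end Aux

theorem stmt7
    {Ω : Type*} {mΩ : MeasurableSpace Ω} (μ : Measure Ω) [IsProbabilityMeasure μ]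
    (ℱ : Filtration ℝ mΩ) (T : ℝ) (hT : 0 < T)
    -- the filtration supports a Brownian motion `W`:
    (W : ℝ → Ω → ℝ) (hW_adapted : Adapted ℱ W)
    (hW_cont : ∀ᵐ ω ∂μ, ContinuousOn (fun t => W t ω) (Icc 0 T))
    (hW_zero : ∀ᵐ ω ∂μ, W 0 ω = 0)
    (hW_indep : ∀ s t : ℝ, 0 ≤ s → s ≤ t → t ≤ T →
      Indep (MeasurableSpace.comap (fun ω => W t ω - W s ω) Real.measurableSpace) (ℱ s) μ)
    (hW_gauss : ∀ s t : ℝ, 0 ≤ s → s ≤ t → t ≤ T →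
      Measure.map (fun ω => W t ω - W s ω) μ = gaussianReal 0 (Real.toNNReal (t - s)))
    (g : ℝ → ℝ) (hg : ContDiff ℝ 2 g) :
    (∃ β, MemB20 μ ℱ T (fun ω => g (W T ω)) β) ↔ ∃ a : ℝ, ∀ x : ℝ, g x = a := by
  constructor
  · rintro ⟨β, hβ⟩
    have hzero : ∀ x, deriv g x = 0 := by
      intro x
      by_contra hne
      rcases lt_or_gt_of_ne hne with hlt | hgt
      · refine key μ ℱ T hT W hW_adapted hW_zero hW_indep hW_gauss (fun y => -g y) hg.neg
          (fun u ω => -β u ω) ?_ (x₀ := x) ?_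
        · obtain ⟨h1, h2, h3⟩ := hβ
          refine ⟨IsStronglyProgressive.neg h1, ?_, ?_⟩
          · refine h2.mono fun ω h => ?_
            simpa only [neg_sq] using h
          · refine h3.mono fun ω h => ?_
            rw [integral_neg, h]
        · rw [deriv.fun_neg]
          linarith
      · exact key μ ℱ T hT W hW_adapted hW_zero hW_indep hW_gauss g hg β hβ hgt
    exact ⟨g 0, fun x => is_const_of_deriv_eq_zero (hg.differentiable two_ne_zero) hzero x 0⟩
  · rintro ⟨a, ha⟩
    refine ⟨fun _ _ => a / T, progMeasurable_const _ _, ?_, ?_⟩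
    · refine ae_of_all _ fun ω => ?_
      rw [setLIntegral_const]
      exact ENNReal.mul_lt_top ENNReal.ofReal_lt_top (by simp [Real.volume_Ioc])
    · refine ae_of_all _ fun ω => ?_
      rw [setIntegral_const]
      simp only [measureReal_def, Real.volume_Ioc, sub_zero, smul_eq_mul, ENNReal.toReal_ofReal hT.le, ha]
      field_simp
end

section
/- Let T > 0 and let h : [0,T) → ℝ be continuous. If ∫₀^t h(u) du + (T−t)·h(t) = 0 for every t ∈ [0,T), then h(t) = 0 for all t ∈ [0,T). Consequently, a continuous solution of the Volterra equation β_t·(T−t) = m_t − ∫₀^t β_u du on [0,T), for a given continuous m, is unique. -/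
open MeasureTheory Set intervalIntegral

theorem key9 (T : ℝ) (hT : 0 < T) (h : ℝ → ℝ) (hc : ContinuousOn h (Ico 0 T))
    (heq : ∀ t ∈ Ico (0:ℝ) T, (∫ u in Ioc (0:ℝ) t, h u) + (T - t) * h t = 0) :
    ∀ t ∈ Ico (0:ℝ) T, h t = 0 := by
  intro t ht
  obtain ⟨ht0, htT⟩ := ht
  set F : ℝ → ℝ := fun s => ∫ u in (0:ℝ)..s, h u with hF
  have hIcc : ∀ s ∈ Icc (0:ℝ) t, s ∈ Ico (0:ℝ) T := fun s hs => ⟨hs.1, lt_of_le_of_lt hs.2 htT⟩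
  have hne : ∀ s ∈ Icc (0:ℝ) t, T - s ≠ 0 := fun s hs =>
    sub_ne_zero_of_ne (lt_of_le_of_lt hs.2 htT).ne'
  have heq' : ∀ s ∈ Icc (0:ℝ) t, F s + (T - s) * h s = 0 := by
    intro s hs
    have h0 := heq s (hIcc s hs)
    show (∫ u in (0:ℝ)..s, h u) + (T - s) * h s = 0
    rwa [integral_of_le hs.1]
  -- F is continuous on Icc 0 t
  have hint : IntegrableOn h (Icc 0 t) := (hc.mono (fun x hx => hIcc x hx)).integrableOn_Icc
  have hFc : ContinuousOn F (Icc 0 t) := by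
    have := intervalIntegral.continuousOn_primitive_interval
      (f := h) (a := (0:ℝ)) (b := t) (by rwa [uIcc_of_le ht0])
    rwa [uIcc_of_le ht0] at this
  set G : ℝ → ℝ := fun s => F s * (T - s)⁻¹ with hG
  have hGc : ContinuousOn G (Icc 0 t) := by
    apply hFc.mul
    exact (continuousOn_const.sub continuousOn_id).inv₀ hne
  have hderiv : ∀ s ∈ Ico (0:ℝ) t, HasDerivWithinAt G 0 (Ici s) s := by
    intro s hs
    have hsIcc : s ∈ Icc (0:ℝ) t := ⟨hs.1, le_of_lt hs.2⟩
    have hsT : s < T := lt_trans hs.2 htT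
    have hmemIci : Ico (0:ℝ) T ∈ nhdsWithin s (Ici s) :=
      Ico_mem_nhdsGE_of_mem ⟨hs.1, hsT⟩
    -- derivative of F
    have hFd : HasDerivWithinAt F (h s) (Ici s) s := by
      have hmemIoi : Ico (0:ℝ) T ∈ nhdsWithin s (Ioi s) :=
        Ico_mem_nhdsGT_of_mem ⟨hs.1, hsT⟩
      apply intervalIntegral.integral_hasDerivWithinAt_right
        (s := Ici s) (t := Ioi s)
      · refine ContinuousOn.intervalIntegrable (hc.mono ?_)
        rw [uIcc_of_le hs.1]
        exact fun x hx => ⟨hx.1, lt_of_le_of_lt (hx.2.trans (le_of_lt hs.2)) htT⟩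
      · exact ⟨Ico 0 T, hmemIoi, hc.aestronglyMeasurable measurableSet_Ico⟩
      · exact (hc s ⟨hs.1, hsT⟩).mono_of_mem_nhdsWithin hmemIoi
    -- derivative of (T - ·)⁻¹
    have hinv : HasDerivWithinAt (fun x : ℝ => (T - x)⁻¹) ((T - s)⁻¹ ^ 2) (Ici s) s := by
      have h1 : HasDerivAt (fun x : ℝ => T - x) (-1) s := by
        simpa using (hasDerivAt_id' (x := s)).const_sub T
      have := h1.inv (hne s hsIcc)
      have e : -(-1) / (T - s) ^ 2 = (T - s)⁻¹ ^ 2 := by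
        field_simp
      rw [e] at this
      exact this.hasDerivWithinAt
    have hprod := hFd.mul hinv
    have hFs : F s = -(T - s) * h s := by
      have := heq' s hsIcc; linarith
    have hzero : h s * (T - s)⁻¹ + F s * ((T - s)⁻¹ ^ 2) = 0 := by
      rw [hFs]
      field_simp [hne s hsIcc]
      ring
    rw [hzero] at hprod
    exact hprod
  have hGt : G t = G 0 :=
    constant_of_has_deriv_right_zero hGc hderiv t ⟨ht0, le_refl t⟩
  have hF0 : F 0 = 0 := intervalIntegral.integral_same
  have hG0 : G 0 = 0 := by simp [hG, hF0]
  have hFt : F t = 0 := by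
    have : F t * (T - t)⁻¹ = 0 := hGt.trans hG0
    rcases mul_eq_zero.mp this with h' | h'
    · exact h'
    · exact absurd h' (inv_ne_zero (hne t ⟨ht0, le_refl t⟩))
  have := heq' t ⟨ht0, le_refl t⟩
  rw [hFt, zero_add] at this
  rcases mul_eq_zero.mp this with h' | h'
  · exact absurd h' (hne t ⟨ht0, le_refl t⟩)
  · exact h'

theorem stmt9 (T : ℝ) (hT : 0 < T) :
    (∀ h : ℝ → ℝ, ContinuousOn h (Ico 0 T) →
      (∀ t ∈ Ico (0:ℝ) T, (∫ u in Ioc (0:ℝ) t, h u) + (T - t) * h t = 0) →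
      ∀ t ∈ Ico (0:ℝ) T, h t = 0) ∧
    -- consequently, continuous solutions of the Volterra equation
    -- `β_t (T - t) = m_t - ∫₀^t β_u du` on `[0,T)` are unique:
    (∀ m β₁ β₂ : ℝ → ℝ, ContinuousOn m (Ico 0 T) →
      ContinuousOn β₁ (Ico 0 T) → ContinuousOn β₂ (Ico 0 T) →
      (∀ t ∈ Ico (0:ℝ) T, β₁ t * (T - t) = m t - ∫ u in Ioc (0:ℝ) t, β₁ u) →
      (∀ t ∈ Ico (0:ℝ) T, β₂ t * (T - t) = m t - ∫ u in Ioc (0:ℝ) t, β₂ u) →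
      ∀ t ∈ Ico (0:ℝ) T, β₁ t = β₂ t) := by
  constructor
  · exact key9 T hT
  · intro m β₁ β₂ hm hb1 hb2 he1 he2 t ht
    have key := key9 T hT (fun s => β₁ s - β₂ s) (hb1.sub hb2) ?_ t ht
    · have hk : β₁ t - β₂ t = 0 := key
      linarith
    · intro s hs
      have hsub : ∀ β : ℝ → ℝ, ContinuousOn β (Ico 0 T) → IntegrableOn β (Ioc 0 s) := by
        intro β hβ
        have : IntegrableOn β (Icc 0 s) :=
          (hβ.mono (fun x hx => ⟨hx.1, lt_of_le_of_lt hx.2 hs.2⟩)).integrableOn_Icc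
        exact this.mono_set Ioc_subset_Icc_self
      rw [MeasureTheory.integral_sub (hsub β₁ hb1) (hsub β₂ hb2)]
      have h1 := he1 s hs
      have h2 := he2 s hs
      ring_nf
      ring_nf at h1 h2
      linarith
end

section
/- Let β be a progressively measurable process with E[∫₀^T β_u² du] < ∞ and set A_t = ∫₀^t β_u du for t ∈ [0,T]. Assume that E[∫₀^T β_u · γ_u du] = 0 for every progressively measurable γ with E[∫₀^T γ_u² du] < ∞ and ∫₀^T γ_u du = 0 a.s. Then for all 0 ≤ t < s < T, one has E[(A_s − A_t)/(s−t) | F_t] = E[(A_T − A_s)/(T−s) | F_t] almost surely. -/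
open MeasureTheory Filter Set
open scoped ENNReal Topology

theorem stmt19
    {Ω : Type*} {mΩ : MeasurableSpace Ω} (μ : Measure Ω) [IsProbabilityMeasure μ]
    (ℱ : Filtration ℝ mΩ) (T : ℝ) (hT : 0 < T)
    (β : ℝ → Ω → ℝ) (hβ_prog : ProgMeasurable ℱ β)
    (hβ_fin : (∫⁻ ω, (∫⁻ u in Ioc (0:ℝ) T, ENNReal.ofReal ((β u ω)^2)) ∂μ) < ⊤)
    -- `A_t = ∫₀^t β_u du`
    (A : ℝ → Ω → ℝ) (hA : ∀ t ω, A t ω = ∫ u in Ioc (0:ℝ) t, β u ω)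
    -- orthogonality: `E[∫₀^T β_u γ_u du] = 0` for every progressively measurable `γ`
    -- with `E[∫₀^T γ_u² du] < ∞` and `∫₀^T γ_u du = 0` a.s.
    (horth : ∀ γ : ℝ → Ω → ℝ, ProgMeasurable ℱ γ →
      (∫⁻ ω, (∫⁻ u in Ioc (0:ℝ) T, ENNReal.ofReal ((γ u ω)^2)) ∂μ) < ⊤ →
      (∀ᵐ ω ∂μ, ∫ u in Ioc (0:ℝ) T, γ u ω = 0) →
      (∫ ω, (∫ u in Ioc (0:ℝ) T, β u ω * γ u ω) ∂μ) = 0) :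
    ∀ s t : ℝ, 0 ≤ t → t < s → s < T →
      μ[fun ω => (A s ω - A t ω) / (s - t)|ℱ t]
        =ᵐ[μ] μ[fun ω => (A T ω - A s ω) / (T - s)|ℱ t] := by
  intro s t ht hts hsT
  have hst : (0:ℝ) < s - t := by linarith
  have hTs : (0:ℝ) < T - s := by linarith
  have htT : t < T := lt_trans hts hsT
  -- Jointly measurable modification of β
  set B : ℝ × Ω → ℝ := fun p => β (min p.1 T) p.2 with hBdef
  have hφ : Measurable (fun p : ℝ × Ω => ((⟨min p.1 T, mem_Iic.2 (min_le_right _ _)⟩ : Set.Iic T), p.2) :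
      ℝ × Ω → Set.Iic T × Ω) := by
    refine Measurable.prodMk ?_ ?_
    · exact (measurable_fst.min measurable_const).subtype_mk
    · exact measurable_snd
  have hB : StronglyMeasurable B := by
    have h2 : @Measurable (ℝ × Ω) Ω Prod.instMeasurableSpace (ℱ T) Prod.snd :=
      measurable_snd.mono le_rfl (ℱ.le T)
    have h1 : @Measurable (ℝ × Ω) (Set.Iic T) Prod.instMeasurableSpace
        Subtype.instMeasurableSpace
        (fun p => (⟨min p.1 T, mem_Iic.2 (min_le_right _ _)⟩ : Set.Iic T)) :=
      (measurable_fst.min measurable_const).subtype_mk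
    have hφm : @Measurable (ℝ × Ω) (Set.Iic T × Ω) Prod.instMeasurableSpace
        (Subtype.instMeasurableSpace.prod (ℱ T))
        (fun p => ((⟨min p.1 T, mem_Iic.2 (min_le_right _ _)⟩ : Set.Iic T), p.2)) :=
      h1.prodMk h2
    exact (hβ_prog T).comp_measurable hφm
  have hBω : ∀ ω, StronglyMeasurable (fun u => B (u, ω)) := fun ω =>
    hB.comp_measurable (measurable_id.prodMk measurable_const)
  have hBeq : ∀ r : ℝ, r ≤ T → ∀ ω, ∀ u ∈ Ioc (0:ℝ) r, β u ω = B (u, ω) := by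
    intro r hr ω u hu
    simp only [hBdef, min_eq_left (le_trans hu.2 hr)]
  -- L¹ bound on β
  have habs : ∀ x : ℝ, (‖x‖₊ : ℝ≥0∞) ≤ 1 + ENNReal.ofReal (x^2) := by
    intro x
    rw [← enorm_eq_nnnorm, ← ofReal_norm]
    calc ENNReal.ofReal ‖x‖ ≤ ENNReal.ofReal (1 + x^2) :=
          ENNReal.ofReal_le_ofReal (by rw [Real.norm_eq_abs]; nlinarith [abs_nonneg x, sq_abs x])
      _ = 1 + ENNReal.ofReal (x^2) := by
          rw [ENNReal.ofReal_add (by norm_num) (sq_nonneg _), ENNReal.ofReal_one]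
  have hβ_l1 : (∫⁻ ω, (∫⁻ u in Ioc (0:ℝ) T, (‖β u ω‖₊ : ℝ≥0∞)) ∂μ) < ⊤ := by
    have hin : ∀ ω, (∫⁻ u in Ioc (0:ℝ) T, (‖β u ω‖₊ : ℝ≥0∞)) ≤
        ENNReal.ofReal T + ∫⁻ u in Ioc (0:ℝ) T, ENNReal.ofReal ((β u ω)^2) := by
      intro ω
      calc (∫⁻ u in Ioc (0:ℝ) T, (‖β u ω‖₊ : ℝ≥0∞))
          ≤ ∫⁻ u in Ioc (0:ℝ) T, (1 + ENNReal.ofReal ((β u ω)^2)) :=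
            lintegral_mono fun u => habs _
        _ = (∫⁻ _ in Ioc (0:ℝ) T, (1:ℝ≥0∞)) + ∫⁻ u in Ioc (0:ℝ) T, ENNReal.ofReal ((β u ω)^2) :=
            lintegral_add_left measurable_const _
        _ ≤ ENNReal.ofReal T + ∫⁻ u in Ioc (0:ℝ) T, ENNReal.ofReal ((β u ω)^2) := by
            rw [setLIntegral_const, one_mul, Real.volume_Ioc, sub_zero]
    calc (∫⁻ ω, (∫⁻ u in Ioc (0:ℝ) T, (‖β u ω‖₊ : ℝ≥0∞)) ∂μ)
        ≤ ∫⁻ ω, (ENNReal.ofReal T + ∫⁻ u in Ioc (0:ℝ) T, ENNReal.ofReal ((β u ω)^2)) ∂μ :=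
          lintegral_mono fun ω => hin ω
      _ = ENNReal.ofReal T * μ univ +
            ∫⁻ ω, (∫⁻ u in Ioc (0:ℝ) T, ENNReal.ofReal ((β u ω)^2)) ∂μ := by
          rw [lintegral_add_left measurable_const, lintegral_const]
      _ < ⊤ := by
          refine ENNReal.add_lt_top.2 ⟨?_, hβ_fin⟩
          exact ENNReal.mul_lt_top ENNReal.ofReal_lt_top (measure_lt_top _ _)
  -- a.e. integrability in u
  have hβ_meas_int : Measurable (fun ω => ∫⁻ u in Ioc (0:ℝ) T, (‖β u ω‖₊ : ℝ≥0∞)) := by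
    have heq : (fun ω => ∫⁻ u in Ioc (0:ℝ) T, (‖β u ω‖₊ : ℝ≥0∞)) =
        fun ω => ∫⁻ u in Ioc (0:ℝ) T, (‖B (u, ω)‖₊ : ℝ≥0∞) := by
      funext ω
      exact setLIntegral_congr_fun measurableSet_Ioc
        (fun u hu => by rw [hBeq T le_rfl ω u hu])
    rw [heq]
    exact Measurable.lintegral_prod_right' ((hB.measurable.comp measurable_swap).enorm)
  have hae : ∀ᵐ ω ∂μ, IntegrableOn (fun u => β u ω) (Ioc (0:ℝ) T) := by
    filter_upwards [ae_lt_top hβ_meas_int hβ_l1.ne] with ω hω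
    refine ⟨((hBω ω).aestronglyMeasurable).congr ?_, hω⟩
    refine (ae_restrict_iff' measurableSet_Ioc).2 (ae_of_all _ fun u hu => ?_)
    exact (hBeq T le_rfl ω u hu).symm
  -- measurability and integrability of A
  have hA_sm : ∀ r : ℝ, r ≤ T → StronglyMeasurable (fun ω => A r ω) := by
    intro r hr
    have heq : (fun ω => A r ω) = fun ω => ∫ u in Ioc (0:ℝ) r, B (u, ω) := by
      funext ω
      rw [hA r ω]
      exact setIntegral_congr_fun measurableSet_Ioc (fun u hu => hBeq r hr ω u hu)
    rw [heq]
    exact hB.integral_prod_left'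
  have hA_int : ∀ r : ℝ, r ≤ T → Integrable (fun ω => A r ω) μ := by
    intro r hr
    refine ⟨(hA_sm r hr).aestronglyMeasurable, ?_⟩
    have hb : ∀ ω, (‖A r ω‖₊ : ℝ≥0∞) ≤ ∫⁻ u in Ioc (0:ℝ) T, (‖β u ω‖₊ : ℝ≥0∞) := by
      intro ω
      rw [hA r ω]
      exact le_trans (enorm_integral_le_lintegral_enorm _)
        (lintegral_mono_set (Ioc_subset_Ioc_right hr))
    exact lt_of_le_of_lt (lintegral_mono hb) hβ_l1
  set f : Ω → ℝ := fun ω => (A s ω - A t ω) / (s - t) with hfdef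
  set g : Ω → ℝ := fun ω => (A T ω - A s ω) / (T - s) with hgdef
  have hf_int : Integrable f μ := (((hA_int s hsT.le).sub (hA_int t htT.le)).div_const _)
  have hg_int : Integrable g μ := (((hA_int T le_rfl).sub (hA_int s hsT.le)).div_const _)
  -- the key set-integral equality
  have key : ∀ E : Set Ω, MeasurableSet[ℱ t] E → ∫ ω in E, f ω ∂μ = ∫ ω in E, g ω ∂μ := by
    intro E hE
    have hEm : MeasurableSet E := ℱ.le t E hE
    set c : ℝ → ℝ := fun u => (Ioc t s).indicator (fun _ => (s - t)⁻¹) u -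
        (Ioc s T).indicator (fun _ => (T - s)⁻¹) u with hcdef
    set γ : ℝ → Ω → ℝ := fun u ω => E.indicator (fun _ => (1:ℝ)) ω * c u with hγdef
    have hc0 : ∀ u : ℝ, u ≤ t → c u = 0 := by
      intro u hu
      simp only [hcdef, indicator_apply, mem_Ioc]
      rw [if_neg (by push_neg; intro h; linarith), if_neg (by push_neg; intro h; linarith)]
      ring
    have hcb : ∀ u : ℝ, |c u| ≤ (s - t)⁻¹ + (T - s)⁻¹ := by
      intro u
      have h1 : (0:ℝ) ≤ (s - t)⁻¹ := by positivity
      have h2 : (0:ℝ) ≤ (T - s)⁻¹ := by positivity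
      refine le_trans (abs_sub _ _) (add_le_add ?_ ?_)
      · by_cases h : u ∈ Ioc t s
        · rw [indicator_of_mem h, abs_of_nonneg h1]
        · rw [indicator_of_notMem h, abs_zero]; exact h1
      · by_cases h : u ∈ Ioc s T
        · rw [indicator_of_mem h, abs_of_nonneg h2]
        · rw [indicator_of_notMem h, abs_zero]; exact h2
    have hc_meas : Measurable c :=
      (measurable_const.indicator measurableSet_Ioc).sub
        (measurable_const.indicator measurableSet_Ioc)
    have hγ_prog : ProgMeasurable ℱ γ := by
      intro r
      by_cases hr : t ≤ r
      · have hZ : StronglyMeasurable[ℱ r] (fun ω => E.indicator (fun _ => (1:ℝ)) ω) :=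
          (stronglyMeasurable_const.indicator hE).mono (ℱ.mono hr)
        have heq : (fun p : Set.Iic r × Ω => γ p.1 p.2) =
            fun p : Set.Iic r × Ω => c (p.1 : ℝ) * E.indicator (fun _ => (1:ℝ)) p.2 := by
          funext p; simp only [hγdef]; ring
        rw [heq]
        exact (hc_meas.stronglyMeasurable.comp_measurable
            (measurable_subtype_coe.comp (@measurable_fst (Set.Iic r) Ω _ (ℱ r)))).mul
          (hZ.comp_measurable (@measurable_snd (Set.Iic r) Ω _ (ℱ r)))
      · have hzero : (fun p : Set.Iic r × Ω => γ p.1 p.2) = fun _ => 0 := by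
          funext p
          have hp : (p.1 : ℝ) ≤ t := le_trans p.1.2 (le_of_not_ge hr)
          simp [hγdef, hc0 _ hp]
        rw [hzero]
        exact @stronglyMeasurable_const _ _ (Subtype.instMeasurableSpace.prod (ℱ r)) _ _
    have hγ_sq : (∫⁻ ω, (∫⁻ u in Ioc (0:ℝ) T, ENNReal.ofReal ((γ u ω)^2)) ∂μ) < ⊤ := by
      set C : ℝ := (s - t)⁻¹ + (T - s)⁻¹ with hCdef
      have hb : ∀ u ω, ENNReal.ofReal ((γ u ω)^2) ≤ ENNReal.ofReal (C^2) := by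
        intro u ω
        apply ENNReal.ofReal_le_ofReal
        have hZ : |E.indicator (fun _ => (1:ℝ)) ω| ≤ 1 := by
          by_cases h : ω ∈ E <;> simp [h]
        have h1 : |γ u ω| ≤ C := by
          calc |γ u ω| = |E.indicator (fun _ => (1:ℝ)) ω| * |c u| := abs_mul _ _
            _ ≤ 1 * C := mul_le_mul hZ (hcb u) (abs_nonneg _) zero_le_one
            _ = C := one_mul C
        calc (γ u ω)^2 = |γ u ω|^2 := (sq_abs _).symm
          _ ≤ C^2 := pow_le_pow_left₀ (abs_nonneg _) h1 2
      calc (∫⁻ ω, (∫⁻ u in Ioc (0:ℝ) T, ENNReal.ofReal ((γ u ω)^2)) ∂μ)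
          ≤ ∫⁻ _, (ENNReal.ofReal (C^2) * volume (Ioc (0:ℝ) T)) ∂μ := by
            refine lintegral_mono fun ω => ?_
            calc (∫⁻ u in Ioc (0:ℝ) T, ENNReal.ofReal ((γ u ω)^2))
                ≤ ∫⁻ _ in Ioc (0:ℝ) T, ENNReal.ofReal (C^2) := lintegral_mono fun u => hb u ω
              _ = ENNReal.ofReal (C^2) * volume (Ioc (0:ℝ) T) := setLIntegral_const _ _
        _ = ENNReal.ofReal (C^2) * volume (Ioc (0:ℝ) T) := by
            rw [lintegral_const, measure_univ, mul_one]
        _ < ⊤ := ENNReal.mul_lt_top ENNReal.ofReal_lt_top (by rw [Real.volume_Ioc]; exact ENNReal.ofReal_lt_top)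
    have hγ_zero : ∀ ω, ∫ u in Ioc (0:ℝ) T, γ u ω = 0 := by
      intro ω
      have ic1 : IntegrableOn (fun _ : ℝ => (s - t)⁻¹) (Ioc t s) :=
        integrableOn_const (by rw [Real.volume_Ioc]; exact ENNReal.ofReal_ne_top)
      have ic2 : IntegrableOn (fun _ : ℝ => (T - s)⁻¹) (Ioc s T) :=
        integrableOn_const (by rw [Real.volume_Ioc]; exact ENNReal.ofReal_ne_top)
      have i1 : Integrable ((Ioc t s).indicator (fun _ : ℝ => (s - t)⁻¹))
          (volume.restrict (Ioc (0:ℝ) T)) :=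
        (ic1.integrable_indicator measurableSet_Ioc).integrableOn
      have i2 : Integrable ((Ioc s T).indicator (fun _ : ℝ => (T - s)⁻¹))
          (volume.restrict (Ioc (0:ℝ) T)) :=
        (ic2.integrable_indicator measurableSet_Ioc).integrableOn
      have hsub1 : Ioc t s ⊆ Ioc (0:ℝ) T := Ioc_subset_Ioc ht hsT.le
      have hsub2 : Ioc s T ⊆ Ioc (0:ℝ) T := Ioc_subset_Ioc (by linarith) le_rfl
      have hc_int : ∫ u in Ioc (0:ℝ) T, c u = 0 := by
        rw [hcdef]
        rw [integral_sub i1 i2, setIntegral_indicator measurableSet_Ioc,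
          setIntegral_indicator measurableSet_Ioc, inter_eq_right.2 hsub1,
          inter_eq_right.2 hsub2, setIntegral_const, setIntegral_const,
          Real.volume_real_Ioc_of_le hts.le, Real.volume_real_Ioc_of_le hsT.le, smul_eq_mul, smul_eq_mul,
          mul_inv_cancel₀ hst.ne', mul_inv_cancel₀ hTs.ne', sub_self]
      calc ∫ u in Ioc (0:ℝ) T, γ u ω
          = E.indicator (fun _ => (1:ℝ)) ω * ∫ u in Ioc (0:ℝ) T, c u := integral_const_mul _ _
        _ = 0 := by rw [hc_int, mul_zero]
    have H := horth γ hγ_prog hγ_sq (ae_of_all _ hγ_zero)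
    have hinner : (fun ω => ∫ u in Ioc (0:ℝ) T, β u ω * γ u ω) =ᵐ[μ]
        fun ω => E.indicator (fun _ => (1:ℝ)) ω * (f ω - g ω) := by
      filter_upwards [hae] with ω hI
      have h1 : IntegrableOn (fun u => β u ω) (Ioc t s) :=
        hI.mono_set (Ioc_subset_Ioc ht hsT.le)
      have h2 : IntegrableOn (fun u => β u ω) (Ioc s T) :=
        hI.mono_set (Ioc_subset_Ioc (by linarith) le_rfl)
      have h0t : IntegrableOn (fun u => β u ω) (Ioc (0:ℝ) t) :=
        hI.mono_set (Ioc_subset_Ioc le_rfl htT.le)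
      have h0s : IntegrableOn (fun u => β u ω) (Ioc (0:ℝ) s) :=
        hI.mono_set (Ioc_subset_Ioc le_rfl hsT.le)
      have hadd1 : ∫ u in Ioc (0:ℝ) s, β u ω =
          (∫ u in Ioc (0:ℝ) t, β u ω) + ∫ u in Ioc t s, β u ω := by
        rw [← setIntegral_union (Ioc_disjoint_Ioc_of_le le_rfl) measurableSet_Ioc h0t h1,
          Ioc_union_Ioc_eq_Ioc ht hts.le]
      have hadd2 : ∫ u in Ioc (0:ℝ) T, β u ω =
          (∫ u in Ioc (0:ℝ) s, β u ω) + ∫ u in Ioc s T, β u ω := by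
        rw [← setIntegral_union (Ioc_disjoint_Ioc_of_le le_rfl) measurableSet_Ioc h0s h2,
          Ioc_union_Ioc_eq_Ioc (by linarith) hsT.le]
      have hpt : ∀ u, β u ω * γ u ω = E.indicator (fun _ => (1:ℝ)) ω *
          ((Ioc t s).indicator (fun u => β u ω * (s - t)⁻¹) u -
            (Ioc s T).indicator (fun u => β u ω * (T - s)⁻¹) u) := by
        intro u
        simp only [hγdef, hcdef, indicator_apply]
        split_ifs <;> ring
      have i1 : Integrable ((Ioc t s).indicator (fun u => β u ω * (s - t)⁻¹))
          (volume.restrict (Ioc (0:ℝ) T)) :=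
        (IntegrableOn.integrable_indicator (h1.mul_const _) measurableSet_Ioc).integrableOn
      have i2 : Integrable ((Ioc s T).indicator (fun u => β u ω * (T - s)⁻¹))
          (volume.restrict (Ioc (0:ℝ) T)) :=
        (IntegrableOn.integrable_indicator (h2.mul_const _) measurableSet_Ioc).integrableOn
      have e1 : ∫ u in Ioc t s, β u ω = A s ω - A t ω := by
        rw [hA s ω, hA t ω, hadd1]; ring
      have e2 : ∫ u in Ioc s T, β u ω = A T ω - A s ω := by
        rw [hA T ω, hA s ω, hadd2]; ring
      calc ∫ u in Ioc (0:ℝ) T, β u ω * γ u ω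
          = ∫ u in Ioc (0:ℝ) T, E.indicator (fun _ => (1:ℝ)) ω *
              ((Ioc t s).indicator (fun u => β u ω * (s - t)⁻¹) u -
                (Ioc s T).indicator (fun u => β u ω * (T - s)⁻¹) u) :=
            setIntegral_congr_fun measurableSet_Ioc (fun u _ => hpt u)
        _ = E.indicator (fun _ => (1:ℝ)) ω *
              ∫ u in Ioc (0:ℝ) T,
                ((Ioc t s).indicator (fun u => β u ω * (s - t)⁻¹) u -
                  (Ioc s T).indicator (fun u => β u ω * (T - s)⁻¹) u) := integral_const_mul _ _
        _ = E.indicator (fun _ => (1:ℝ)) ω *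
              ((∫ u in Ioc t s, β u ω) * (s - t)⁻¹ - (∫ u in Ioc s T, β u ω) * (T - s)⁻¹) := by
            rw [integral_sub i1 i2, setIntegral_indicator measurableSet_Ioc,
              setIntegral_indicator measurableSet_Ioc,
              inter_eq_right.2 (Ioc_subset_Ioc ht hsT.le),
              inter_eq_right.2 (Ioc_subset_Ioc (by linarith : (0:ℝ) ≤ s) le_rfl),
              integral_mul_const, integral_mul_const]
        _ = E.indicator (fun _ => (1:ℝ)) ω * (f ω - g ω) := by
            rw [e1, e2, hfdef, hgdef]
            simp only [div_eq_mul_inv]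
    have hZfg : ∫ ω, E.indicator (fun _ => (1:ℝ)) ω * (f ω - g ω) ∂μ = 0 := by
      rw [← integral_congr_ae hinner]; exact H
    have hind : (fun ω => E.indicator (fun _ => (1:ℝ)) ω * (f ω - g ω)) =
        E.indicator (fun ω => f ω - g ω) := by
      funext ω; by_cases h : ω ∈ E <;> simp [h]
    have hsub : ∫ ω in E, (f ω - g ω) ∂μ = 0 := by
      rw [← integral_indicator hEm, ← hind]; exact hZfg
    rw [integral_sub hf_int.integrableOn hg_int.integrableOn] at hsub
    linarith
  -- conclude
  haveI : SigmaFinite (μ.trim (ℱ.le t)) := by infer_instance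
  exact (ae_eq_condExp_of_forall_setIntegral_eq (ℱ.le t) hf_int
    (fun E _ _ => integrable_condExp.integrableOn)
    (fun E hE hμE => by
      rw [setIntegral_condExp (ℱ.le t) hg_int hE]; exact (key E hE).symm)
    (stronglyMeasurable_condExp.aestronglyMeasurable)).symm
end
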